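/- arXiv:2604.11105 — 7 statements merged into one kernel-verified Lean document; each statement's English description precedes it below -/
import Mathlib

section
/- Let d ≥ 1, μ > 0, let φ : ℝ^d → ℝ be differentiable and μ-strongly convex, let S : ℝ^d → ℝ^d be monotone, and let z⋆ ∈ ℝ^d satisfy ∇φ(z⋆) + S(z⋆) = 0. Let z : ℝ → ℝ^d be twice differentiable and satisfy, for all t ≥ 0, the ODE z''(t) + 2√μ·z'(t) + ∇φ(z(t)) + S(z(t) + (1/√μ)·z'(t)) = 0. Define Ψ(t) = ‖z'(t) + √μ·(z(t) − z⋆)‖² + 2(φ(z(t)) − φ(z⋆) − ⟨∇φ(z⋆), z(t) − z⋆⟩). Then Ψ is differentiable on [0, ∞) and Ψ'(t) ≤ −√μ · Ψ(t) for all t ≥ 0. -/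
open scoped RealInnerProductSpace

lemma key {E : Type*} [NormedAddCommGroup E] [InnerProductSpace ℝ E]
    (s : ℝ) (hs : 0 < s) (p a G c Sw : E) (D : ℝ)
    (hmono : (0:ℝ) ≤ ⟪Sw + c, a + s⁻¹ • p⟫)
    (hsc : D ≤ ⟪G - c, a⟫ - s ^ 2 / 2 * ‖a‖ ^ 2) :
    ⟪-(s • p + G + Sw), p + s • a⟫ + ⟪p + s • a, -(s • p + G + Sw)⟫
      + 2 * (⟪G, p⟫ - ⟪c, p⟫) ≤ -s * (‖p + s • a‖ ^ 2 + 2 * D) := by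
  have hA : (0:ℝ) ≤ ⟪p, p⟫ := real_inner_self_nonneg
  have hnorm : ‖p + s • a‖ ^ 2 = ⟪p, p⟫ + 2 * (s * ⟪p, a⟫) + s ^ 2 * ‖a‖ ^ 2 := by
    rw [← real_inner_self_eq_norm_sq, ← real_inner_self_eq_norm_sq]
    simp only [inner_add_left, inner_add_right, inner_smul_left, inner_smul_right,
      conj_trivial, real_inner_comm a p]
    ring
  have hm1 : s * D ≤ s * (⟪G - c, a⟫ - s ^ 2 / 2 * ‖a‖ ^ 2) :=
    mul_le_mul_of_nonneg_left hsc hs.le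
  have hm2 : (0:ℝ) ≤ s * ⟪Sw + c, a + s⁻¹ • p⟫ := mul_nonneg hs.le hmono
  have hsinv : s * s⁻¹ = 1 := mul_inv_cancel₀ hs.ne'
  have hm2' : (0:ℝ) ≤ s * (⟪Sw, a⟫ + ⟪c, a⟫) + (⟪Sw, p⟫ + ⟪c, p⟫) := by
    have e : s * ⟪Sw + c, a + s⁻¹ • p⟫
        = s * (⟪Sw, a⟫ + ⟪c, a⟫) + (s * s⁻¹) * (⟪Sw, p⟫ + ⟪c, p⟫) := by
      simp only [inner_add_left, inner_add_right, inner_smul_right]; ring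
    rw [e, hsinv, one_mul] at hm2; exact hm2
  simp only [inner_add_left, inner_add_right, inner_sub_left, inner_smul_left,
    inner_smul_right, inner_neg_left, inner_neg_right, conj_trivial, hnorm,
    real_inner_comm] at hm1 hm2' ⊢
  nlinarith [hm1, hm2', mul_nonneg hs.le hA]

/-- Theorem 3.1 / `thm:ode` of the paper, differential form.
Under the NOD ODE, the Lyapunov function `Ψ` is differentiable on `[0, ∞)` and
satisfies `Ψ'(t) ≤ -√μ · Ψ(t)` there. -/
theorem nod_ode_lyapunov_decrease
    (d : ℕ) (hd : 1 ≤ d) (μ : ℝ) (hμ : 0 < μ)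
    (φ : EuclideanSpace ℝ (Fin d) → ℝ)
    (S : EuclideanSpace ℝ (Fin d) → EuclideanSpace ℝ (Fin d))
    (zstar : EuclideanSpace ℝ (Fin d))
    (hφdiff : Differentiable ℝ φ)
    (hφsc : ∀ u v : EuclideanSpace ℝ (Fin d),
      φ v ≥ φ u + ⟪gradient φ u, v - u⟫ + μ / 2 * ‖v - u‖ ^ 2)
    (hSmono : ∀ u v : EuclideanSpace ℝ (Fin d), ⟪S u - S v, u - v⟫ ≥ 0)
    (hstar : gradient φ zstar + S zstar = 0)
    (z : ℝ → EuclideanSpace ℝ (Fin d))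
    (hz : Differentiable ℝ z) (hz' : Differentiable ℝ (deriv z))
    (hode : ∀ t : ℝ, 0 ≤ t →
      deriv (deriv z) t + (2 * Real.sqrt μ) • deriv z t + gradient φ (z t)
        + S (z t + (1 / Real.sqrt μ) • deriv z t) = 0)
    (Ψ : ℝ → ℝ)
    (hΨ : ∀ t : ℝ, Ψ t = ‖deriv z t + Real.sqrt μ • (z t - zstar)‖ ^ 2
        + 2 * (φ (z t) - φ zstar - ⟪gradient φ zstar, z t - zstar⟫)) :
    ∀ t : ℝ, 0 ≤ t → DifferentiableAt ℝ Ψ t ∧ deriv Ψ t ≤ -Real.sqrt μ * Ψ t := by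
  have hΨfun : Ψ = fun t => ‖deriv z t + Real.sqrt μ • (z t - zstar)‖ ^ 2
      + 2 * (φ (z t) - φ zstar - ⟪gradient φ zstar, z t - zstar⟫) := funext hΨ
  subst hΨfun
  intro t ht
  set s : ℝ := Real.sqrt μ with hsdef
  have hs0 : 0 < s := Real.sqrt_pos.2 hμ
  have hs2 : s ^ 2 = μ := Real.sq_sqrt hμ.le
  -- basic derivatives
  have h1 : HasDerivAt z (deriv z t) t := (hz t).hasDerivAt
  have h2 : HasDerivAt (deriv z) (deriv (deriv z) t) t := (hz' t).hasDerivAt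
  have hvd : HasDerivAt (fun τ => deriv z τ + s • (z τ - zstar))
      (deriv (deriv z) t + s • deriv z t) t :=
    h2.add ((h1.sub_const zstar).const_smul s)
  -- derivative of the squared norm term
  have hN : HasDerivAt (fun τ => ‖deriv z τ + s • (z τ - zstar)‖ ^ 2)
      (⟪deriv z t + s • (z t - zstar), deriv (deriv z) t + s • deriv z t⟫
        + ⟪deriv (deriv z) t + s • deriv z t, deriv z t + s • (z t - zstar)⟫) t := by
    have h := hvd.inner ℝ hvd
    have heq : (fun τ => ⟪deriv z τ + s • (z τ - zstar), deriv z τ + s • (z τ - zstar)⟫)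
        = fun τ => ‖deriv z τ + s • (z τ - zstar)‖ ^ 2 := by
      funext τ; exact real_inner_self_eq_norm_sq _
    rw [heq] at h
    exact h
  -- derivative of φ ∘ z
  have hgradF : HasFDerivAt φ (InnerProductSpace.toDual ℝ _ (gradient φ (z t))) (z t) :=
    (hφdiff (z t)).hasGradientAt.hasFDerivAt
  have hφz : HasDerivAt (fun τ => φ (z τ)) ⟪gradient φ (z t), deriv z t⟫ t := by
    have h := hgradF.comp_hasDerivAt t h1
    exact h
  -- derivative of the linear term
  have hlin : HasDerivAt (fun τ => ⟪gradient φ zstar, z τ - zstar⟫)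
      ⟪gradient φ zstar, deriv z t⟫ t := by
    have h := (hasDerivAt_const (𝕜 := ℝ) t (gradient φ zstar)).inner ℝ (h1.sub_const zstar)
    simpa using h
  -- derivative of Ψ
  have hΨ' : HasDerivAt (fun τ => ‖deriv z τ + s • (z τ - zstar)‖ ^ 2
      + 2 * (φ (z τ) - φ zstar - ⟪gradient φ zstar, z τ - zstar⟫))
      ((⟪deriv z t + s • (z t - zstar), deriv (deriv z) t + s • deriv z t⟫
        + ⟪deriv (deriv z) t + s • deriv z t, deriv z t + s • (z t - zstar)⟫)
        + 2 * (⟪gradient φ (z t), deriv z t⟫ - ⟪gradient φ zstar, deriv z t⟫)) t :=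
    hN.add (((hφz.sub_const (φ zstar)).sub hlin).const_mul 2)
  refine ⟨hΨ'.differentiableAt, ?_⟩
  show deriv _ t ≤ -s * (‖deriv z t + s • (z t - zstar)‖ ^ 2
      + 2 * (φ (z t) - φ zstar - ⟪gradient φ zstar, z t - zstar⟫))
  rw [hΨ'.deriv]
  -- rewrite the second derivative using the ODE
  have hodet : deriv (deriv z) t + s • deriv z t
      = -(s • deriv z t + gradient φ (z t) + S (z t + (1 / s) • deriv z t)) := by
    have h := hode t ht
    rw [two_mul, add_smul] at h
    refine eq_neg_of_add_eq_zero_left ?_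
    rw [← h]; abel
  rw [hodet]
  -- monotonicity hypothesis in the form needed by `key`
  have hm := hSmono (z t + (1 / s) • deriv z t) zstar
  have hSz : S zstar = -gradient φ zstar := eq_neg_of_add_eq_zero_right hstar
  have hwz : z t + (1 / s) • deriv z t - zstar = (z t - zstar) + s⁻¹ • deriv z t := by
    rw [one_div]; abel
  rw [hwz, hSz, sub_neg_eq_add] at hm
  -- strong convexity hypothesis in the form needed by `key`
  have h3 := hφsc (z t) zstar
  have e1 : zstar - z t = -(z t - zstar) := by abel
  rw [e1, inner_neg_right, norm_neg] at h3
  have hsc : φ (z t) - φ zstar - ⟪gradient φ zstar, z t - zstar⟫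
      ≤ ⟪gradient φ (z t) - gradient φ zstar, z t - zstar⟫
        - s ^ 2 / 2 * ‖z t - zstar‖ ^ 2 := by
    rw [inner_sub_left, hs2]; linarith
  have hk := key s hs0 (deriv z t) (z t - zstar) (gradient φ (z t)) (gradient φ zstar)
    (S (z t + (1 / s) • deriv z t))
    (φ (z t) - φ zstar - ⟪gradient φ zstar, z t - zstar⟫) hm hsc
  linarith
end

section
/- Let d ≥ 1, μ > 0, let φ : ℝ^d → ℝ be differentiable and μ-strongly convex, let S : ℝ^d → ℝ^d be monotone, and let z⋆ ∈ ℝ^d satisfy ∇φ(z⋆) + S(z⋆) = 0. Let z : ℝ → ℝ^d be twice differentiable and satisfy, for all t ≥ 0, z''(t) + 2√μ·z'(t) + ∇φ(z(t)) + S(z(t) + (1/√μ)·z'(t)) = 0. Define Ψ(t) = ‖z'(t) + √μ·(z(t) − z⋆)‖² + 2(φ(z(t)) − φ(z⋆) − ⟨∇φ(z⋆), z(t) − z⋆⟩). Then for all t ≥ 0, μ·‖z(t) − z⋆‖² ≤ Ψ(t) ≤ Ψ(0)·exp(−√μ·t). -/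
set_option maxHeartbeats 1000000


open scoped RealInnerProductSpace

/-- Theorem 3.1 / `thm:ode` of the paper, integrated form.
Under the NOD ODE, the Lyapunov function `Ψ` satisfies
`μ‖z(t) − z⋆‖² ≤ Ψ(t) ≤ Ψ(0)·exp(−√μ·t)` for all `t ≥ 0`. -/
theorem nod_ode_exponential_stability
    (d : ℕ) (hd : 1 ≤ d) (μ : ℝ) (hμ : 0 < μ)
    (φ : EuclideanSpace ℝ (Fin d) → ℝ)
    (S : EuclideanSpace ℝ (Fin d) → EuclideanSpace ℝ (Fin d))
    (zstar : EuclideanSpace ℝ (Fin d))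
    (hφdiff : Differentiable ℝ φ)
    (hφsc : ∀ u v : EuclideanSpace ℝ (Fin d),
      φ v ≥ φ u + ⟪gradient φ u, v - u⟫ + μ / 2 * ‖v - u‖ ^ 2)
    (hSmono : ∀ u v : EuclideanSpace ℝ (Fin d), ⟪S u - S v, u - v⟫ ≥ 0)
    (hstar : gradient φ zstar + S zstar = 0)
    (z : ℝ → EuclideanSpace ℝ (Fin d))
    (hz : Differentiable ℝ z) (hz' : Differentiable ℝ (deriv z))
    (hode : ∀ t : ℝ, 0 ≤ t →
      deriv (deriv z) t + (2 * Real.sqrt μ) • deriv z t + gradient φ (z t)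
        + S (z t + (1 / Real.sqrt μ) • deriv z t) = 0)
    (Ψ : ℝ → ℝ)
    (hΨ : ∀ t : ℝ, Ψ t = ‖deriv z t + Real.sqrt μ • (z t - zstar)‖ ^ 2
        + 2 * (φ (z t) - φ zstar - ⟪gradient φ zstar, z t - zstar⟫)) :
    ∀ t : ℝ, 0 ≤ t →
      μ * ‖z t - zstar‖ ^ 2 ≤ Ψ t ∧ Ψ t ≤ Ψ 0 * Real.exp (-Real.sqrt μ * t) := by
  have hs : 0 < Real.sqrt μ := Real.sqrt_pos.mpr hμ
  set s : ℝ := Real.sqrt μ with hsdef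
  have hs2 : s * s = μ := Real.mul_self_sqrt hμ.le
  have hsne : s ≠ 0 := ne_of_gt hs
  set gs : EuclideanSpace ℝ (Fin d) := gradient φ zstar with hgs
  set v : ℝ → EuclideanSpace ℝ (Fin d) := fun t => deriv z t + s • (z t - zstar) with hv
  -- derivative of v
  have hvD : ∀ t : ℝ, HasDerivAt v (deriv (deriv z) t + s • deriv z t) t := by
    intro t
    exact ((hz' t).hasDerivAt).add ((((hz t).hasDerivAt).sub_const zstar).const_smul s)
  -- F = Ψ written with inner products
  set F : ℝ → ℝ := fun t => ⟪v t, v t⟫ + 2 * (φ (z t) - φ zstar - ⟪gs, z t - zstar⟫) with hFdef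
  have hΨF : ∀ t, Ψ t = F t := by
    intro t
    rw [hΨ t, hFdef]
    simp only [hv, real_inner_self_eq_norm_sq]
  set D : ℝ → ℝ := fun t =>
    (⟪v t, deriv (deriv z) t + s • deriv z t⟫ + ⟪deriv (deriv z) t + s • deriv z t, v t⟫)
      + 2 * (⟪gradient φ (z t), deriv z t⟫ - ⟪gs, deriv z t⟫) with hDdef
  have hF : ∀ t : ℝ, HasDerivAt F (D t) t := by
    intro t
    have h1 : HasDerivAt (fun x => ⟪v x, v x⟫)
        (⟪v t, deriv (deriv z) t + s • deriv z t⟫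
          + ⟪deriv (deriv z) t + s • deriv z t, v t⟫) t :=
      (hvD t).inner ℝ (hvD t)
    have h2 : HasDerivAt (fun x => φ (z x)) ⟪gradient φ (z t), deriv z t⟫ t := by
      have := ((hφdiff (z t)).hasGradientAt).hasFDerivAt.comp_hasDerivAt t (hz t).hasDerivAt
      simpa [InnerProductSpace.toDual_apply_apply, Function.comp_def] using this
    have h3 : HasDerivAt (fun x => ⟪gs, z x - zstar⟫) ⟪gs, deriv z t⟫ t := by
      simpa using (hasDerivAt_const t gs).inner ℝ (((hz t).hasDerivAt).sub_const zstar)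
    exact h1.add (((h2.sub_const (φ zstar)).sub h3).const_mul 2)
  -- key differential inequality
  have hT : ∀ τ : ℝ, 0 ≤ τ → D τ + s * F τ ≤ 0 := by
    intro τ hτ
    set u : EuclideanSpace ℝ (Fin d) := deriv z τ with hu
    set Δ : EuclideanSpace ℝ (Fin d) := z τ - zstar with hΔ
    set g : EuclideanSpace ℝ (Fin d) := gradient φ (z τ) with hg
    set w : EuclideanSpace ℝ (Fin d) := z τ + (1 / s) • u with hw
    have hdd : deriv (deriv z) τ + s • u = -(s • u + g + S w) := by
      have h := hode τ hτ
      rw [← hu, ← hg, ← hw] at h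
      linear_combination (norm := module) h
    have hSz : S zstar = -gs := by
      linear_combination (norm := module) hstar
    have hveq : v τ = s • (w - zstar) := by
      show deriv z τ + s • (z τ - zstar) = s • (z τ + (1 / s) • deriv z τ - zstar)
      match_scalars <;> field_simp
    -- monotonicity step
    have hkey : -⟪gs, v τ⟫ ≤ ⟪S w, v τ⟫ := by
      have h1 : (0:ℝ) ≤ ⟪S w - S zstar, v τ⟫ := by
        rw [hveq, real_inner_smul_right]
        exact mul_nonneg hs.le (hSmono w zstar)
      rw [inner_sub_left, hSz, inner_neg_left] at h1
      linarith
    -- strong convexity step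
    have hconv : φ (z τ) - φ zstar + μ / 2 * ⟪Δ, Δ⟫ ≤ ⟪g, Δ⟫ := by
      have h := hφsc (z τ) zstar
      have he : zstar - z τ = -Δ := by simp only [hΔ]; abel
      rw [he, inner_neg_right, norm_neg, ← hg, ← real_inner_self_eq_norm_sq] at h
      linarith
    have hconv2 : 2 * s * (φ (z τ) - φ zstar) + s * μ * ⟪Δ, Δ⟫ ≤ 2 * s * ⟪g, Δ⟫ := by
      nlinarith [mul_le_mul_of_nonneg_left hconv (by positivity : (0:ℝ) ≤ 2 * s)]
    have hvexp : v τ = u + s • Δ := rfl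
    have huu : (0:ℝ) ≤ ⟪u, u⟫ := real_inner_self_nonneg
    rw [hDdef, hFdef]
    simp only
    rw [hdd, hvexp]
    rw [hvexp] at hkey
    simp only [inner_add_left, inner_add_right, inner_neg_left, inner_neg_right,
      real_inner_smul_left, real_inner_smul_right, inner_sub_left, inner_sub_right] at hkey ⊢
    have h1 : (inner ℝ (gradient φ (z τ)) (deriv z τ) : ℝ) = inner ℝ g u := rfl
    have h2 : (inner ℝ gs (deriv z τ) : ℝ) = inner ℝ gs u := rfl
    have h3 : (inner ℝ gs Δ : ℝ) = inner ℝ gs (z τ) - inner ℝ gs zstar := by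
      rw [hΔ, inner_sub_right]
    have hc1 : (inner ℝ Δ u : ℝ) = inner ℝ u Δ := real_inner_comm u Δ
    have hc2 : (inner ℝ u g : ℝ) = inner ℝ g u := real_inner_comm g u
    have hc3 : (inner ℝ Δ g : ℝ) = inner ℝ g Δ := real_inner_comm g Δ
    have hc4 : (inner ℝ u (S w) : ℝ) = inner ℝ (S w) u := real_inner_comm (S w) u
    have hc5 : (inner ℝ Δ (S w) : ℝ) = inner ℝ (S w) Δ := real_inner_comm (S w) Δ
    have hq2 : s * (s * (s * (inner ℝ Δ Δ : ℝ))) = s * μ * inner ℝ Δ Δ := by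
      linear_combination (s * (inner ℝ Δ Δ : ℝ)) * hs2
    rw [h1, h2] at *
    simp only [hc1, hc2, hc3, hc4, hc5] at *
    have h3s : s * (inner ℝ gs Δ : ℝ) = s * (inner ℝ gs (z τ) - inner ℝ gs zstar) := by rw [h3]
    linarith [hkey, hconv2, mul_nonneg hs.le huu, h3, h3s, hq2]
  -- Gronwall
  set E : ℝ → ℝ := fun t => F t * Real.exp (s * t) with hEdef
  have hE : ∀ t : ℝ, HasDerivAt E (D t * Real.exp (s * t) + F t * (Real.exp (s * t) * s)) t := by
    intro t
    have hexp : HasDerivAt (fun x => Real.exp (s * x)) (Real.exp (s * t) * s) t := by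
      simpa using (((hasDerivAt_id t).const_mul s).exp)
    exact (hF t).mul hexp
  have hanti : AntitoneOn E (Set.Ici 0) := by
    apply antitoneOn_of_deriv_nonpos (convex_Ici 0)
    · exact fun x _ => ((hE x).continuousAt).continuousWithinAt
    · intro x hx
      exact ((hE x).differentiableAt).differentiableWithinAt
    · intro x hx
      rw [interior_Ici] at hx
      rw [(hE x).deriv]
      have h := hT x (le_of_lt hx)
      have hep : 0 < Real.exp (s * x) := Real.exp_pos _
      nlinarith
  intro t ht
  constructor
  · rw [hΨ t]
    have h := hφsc zstar (z t)
    nlinarith [sq_nonneg ‖deriv z t + s • (z t - zstar)‖]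
  · have hEt : E t ≤ E 0 := hanti (Set.self_mem_Ici) (Set.mem_Ici.mpr ht) ht
    have hE0 : E 0 = F 0 := by simp [hEdef]
    have hexp : Real.exp (s * t) * Real.exp (-s * t) = 1 := by
      rw [← Real.exp_add]; ring_nf; exact Real.exp_zero
    rw [hΨF t, hΨF 0]
    have h2 : F t * Real.exp (s * t) ≤ F 0 := by simpa [hEdef] using hEt
    have h3 := mul_le_mul_of_nonneg_right h2 (Real.exp_nonneg (-s * t))
    calc F t = F t * (Real.exp (s * t) * Real.exp (-s * t)) := by rw [hexp]; ring
      _ = F t * Real.exp (s * t) * Real.exp (-s * t) := by ring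
      _ ≤ F 0 * Real.exp (-s * t) := h3
end

section
/- Under the NOD setup (see context), for every integer k ≥ 2, Ψ_k ≥ (μ/2)·‖z̃_k + (1/√(ημ))(z̃_k − z_k) − z⋆‖² + φ̂(z̃_{k−1}) + (1 − ημ)·√(μ/η)·‖z̃_{k−1} − z_{k−1}‖². -/
open scoped RealInnerProductSpace

/-- Descent lemma: an `L`-smooth function satisfies the quadratic upper bound. -/
lemma nod_descent_lemma {d : ℕ} (L : ℝ)
    (φ : EuclideanSpace ℝ (Fin d) → ℝ) (hdiff : Differentiable ℝ φ)
    (hlip : ∀ u v : EuclideanSpace ℝ (Fin d), ‖gradient φ u - gradient φ v‖ ≤ L * ‖u - v‖)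
    (u v : EuclideanSpace ℝ (Fin d)) :
    φ v ≤ φ u + ⟪gradient φ u, v - u⟫ + L / 2 * ‖v - u‖ ^ 2 := by
  set w := v - u with hw
  have hcurve : ∀ t : ℝ, HasDerivAt (fun t : ℝ => φ (u + t • w))
      ⟪gradient φ (u + t • w), w⟫ t := by
    intro t
    have hc : HasDerivAt (fun t : ℝ => u + t • w) w t := by
      simpa using ((hasDerivAt_id t).smul_const w).const_add u
    have hφ : HasFDerivAt φ (InnerProductSpace.toDual ℝ _ (gradient φ (u + t • w)))
        (u + t • w) := (hdiff _).hasGradientAt.hasFDerivAt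
    have := hφ.comp_hasDerivAt t hc
    rw [InnerProductSpace.toDual_apply_apply] at this
    exact this
  set g : ℝ → ℝ := fun t => φ (u + t • w) - t * ⟪gradient φ u, w⟫ - L * t ^ 2 / 2 * ‖w‖ ^ 2
    with hg
  have hgd : ∀ t : ℝ, HasDerivAt g
      (⟪gradient φ (u + t • w), w⟫ - ⟪gradient φ u, w⟫ - L * t * ‖w‖ ^ 2) t := by
    intro t
    have h1 : HasDerivAt (fun t : ℝ => t * ⟪gradient φ u, w⟫) ⟪gradient φ u, w⟫ t := by
      simpa using (hasDerivAt_id t).mul_const _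
    have h2 : HasDerivAt (fun t : ℝ => L * t ^ 2 / 2 * ‖w‖ ^ 2) (L * t * ‖w‖ ^ 2) t := by
      have h3 : HasDerivAt (fun t : ℝ => t ^ 2) (2 * t) t := by
        simpa using hasDerivAt_pow 2 t
      have := ((h3.const_mul L).div_const 2).mul_const (‖w‖ ^ 2)
      rw [show L * t * ‖w‖ ^ 2 = L * (2 * t) / 2 * ‖w‖ ^ 2 by ring]
      exact this
    exact ((hcurve t).sub h1).sub h2
  have hanti : AntitoneOn g (Set.Icc (0 : ℝ) 1) := by
    apply antitoneOn_of_hasDerivWithinAt_nonpos (convex_Icc 0 1)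
      (fun t _ => (hgd t).continuousAt.continuousWithinAt)
      (fun t _ => (hgd t).hasDerivWithinAt)
    intro t ht
    rw [interior_Icc] at ht
    have hb : ⟪gradient φ (u + t • w) - gradient φ u, w⟫ ≤ L * t * ‖w‖ ^ 2 := by
      calc ⟪gradient φ (u + t • w) - gradient φ u, w⟫
          ≤ ‖gradient φ (u + t • w) - gradient φ u‖ * ‖w‖ := real_inner_le_norm _ _
        _ ≤ (L * ‖(u + t • w) - u‖) * ‖w‖ :=
            mul_le_mul_of_nonneg_right (hlip _ _) (norm_nonneg _)
        _ = L * t * ‖w‖ ^ 2 := by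
            simp [norm_smul, abs_of_pos ht.1]; ring
    have := inner_sub_left (𝕜 := ℝ) (gradient φ (u + t • w)) (gradient φ u) w
    linarith [this ▸ hb]
  have h01 := hanti (Set.left_mem_Icc.2 zero_le_one) (Set.right_mem_Icc.2 zero_le_one) zero_le_one
  have h0 : g 0 = φ u := by simp [hg]
  have h1 : g 1 = φ v - ⟪gradient φ u, w⟫ - L / 2 * ‖w‖ ^ 2 := by
    simp [hg]; simp [hw]
  rw [h0, h1] at h01
  linarith

/-- Cocoercivity-type bound: for a convex `L`-smooth function,
`‖∇φ(u) − ∇φ(z⋆)‖² ≤ 2L(φ(u) − φ(z⋆) − ⟨∇φ(z⋆), u − z⋆⟩)`. -/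
lemma nod_coco_lemma {d : ℕ} (L μ : ℝ) (hL : 0 < L) (hμ : 0 ≤ μ)
    (φ : EuclideanSpace ℝ (Fin d) → ℝ) (hdiff : Differentiable ℝ φ)
    (hsc : ∀ u v : EuclideanSpace ℝ (Fin d),
      φ v ≥ φ u + ⟪gradient φ u, v - u⟫ + μ / 2 * ‖v - u‖ ^ 2)
    (hlip : ∀ u v : EuclideanSpace ℝ (Fin d), ‖gradient φ u - gradient φ v‖ ≤ L * ‖u - v‖)
    (zs u : EuclideanSpace ℝ (Fin d)) :
    ‖gradient φ u - gradient φ zs‖ ^ 2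
      ≤ 2 * L * (φ u - φ zs - ⟪gradient φ zs, u - zs⟫) := by
  set G := gradient φ u - gradient φ zs with hG
  set v := u - (1 / L) • G with hv
  have h1 := nod_descent_lemma L φ hdiff hlip u v
  have hvu : v - u = -((1 / L) • G) := by rw [hv]; abel
  rw [hvu] at h1
  rw [inner_neg_right, real_inner_smul_right] at h1
  have hn : ‖-((1 / L) • G)‖ ^ 2 = (1 / L) ^ 2 * ‖G‖ ^ 2 := by
    rw [norm_neg, norm_smul, Real.norm_eq_abs, abs_of_pos (by positivity : (0:ℝ) < 1 / L)]
    ring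
  rw [hn] at h1
  have h2 := hsc zs v
  have hvz : v - zs = (u - zs) - (1 / L) • G := by rw [hv]; abel
  rw [hvz] at h2
  rw [inner_sub_right, real_inner_smul_right] at h2
  have h3 : φ zs + (⟪gradient φ zs, u - zs⟫ - 1 / L * ⟪gradient φ zs, G⟫)
      ≤ φ v := by nlinarith [sq_nonneg ‖u - zs - (1 / L) • G‖]
  have hGG : ⟪gradient φ u, G⟫ - ⟪gradient φ zs, G⟫ = ‖G‖ ^ 2 := by
    rw [← inner_sub_left, ← hG, real_inner_self_eq_norm_sq]
  have hcomb : (1 / L) * ‖G‖ ^ 2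
      ≤ (φ u - φ zs - ⟪gradient φ zs, u - zs⟫) + L / 2 * ((1 / L) ^ 2 * ‖G‖ ^ 2) := by
    have hGG' : 1 / L * ⟪gradient φ u, G⟫ - 1 / L * ⟪gradient φ zs, G⟫
        = 1 / L * ‖G‖ ^ 2 := by rw [← mul_sub, hGG]
    linarith
  have := mul_le_mul_of_nonneg_left hcomb hL.le
  have e1 : L * ((1 / L) * ‖G‖ ^ 2) = ‖G‖ ^ 2 := by field_simp
  have e2 : L * ((φ u - φ zs - ⟪gradient φ zs, u - zs⟫) + L / 2 * ((1 / L) ^ 2 * ‖G‖ ^ 2))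
      = L * (φ u - φ zs - ⟪gradient φ zs, u - zs⟫) + ‖G‖ ^ 2 / 2 := by
    field_simp
  rw [e1, e2] at this
  linarith


set_option maxHeartbeats 1000000 in
/-- Scalar endgame: weighted Cauchy–Schwarz argument. -/
lemma nod_scalar_lemma (s a η μ Lφ B F X G1 G2 sη sμ sF s2 : ℝ)
    (hs0 : 0 < s) (hs6 : s ≤ 1 / 6) (ha0 : 0 < a) (ha1 : a < 1)
    (hη : 0 < η) (hμ : 0 < μ)
    (hηLφ : η * Lφ ≤ s ^ 2) (hBs : B * (1 - s ^ 2) = s) (hB0 : 0 ≤ B)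
    (hF0 : 0 ≤ F) (hX0 : 0 ≤ X) (hG10 : 0 ≤ G1) (hG20 : 0 ≤ G2)
    (hsη2 : sη ^ 2 = η) (hsμ2 : sμ ^ 2 = μ) (hsF2 : sF ^ 2 = F) (hs22 : s2 ^ 2 = 2)
    (hsη0 : 0 ≤ sη) (hsμ0 : 0 ≤ sμ) (hsF0 : 0 ≤ sF) (hs20 : 0 ≤ s2)
    (hlin : (1 - s) * (sη * G1) ≤ s2 * s * sF + s * sμ * X + s * (1 - a) * (sη * G2)) :
    η * G1 ^ 2 ≤ F + μ / 2 * X ^ 2 + B * η * (1 - a) * (1 - η * Lφ) * G2 ^ 2 := by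
  set p : ℝ := s2 * s * sF with hp
  set q : ℝ := s * sμ * X with hq
  set r : ℝ := s * (1 - a) * (sη * G2) with hr
  have hp0 : 0 ≤ p := by positivity
  have hq0 : 0 ≤ q := by positivity
  have hr0 : 0 ≤ r := by
    apply mul_nonneg (mul_nonneg hs0.le (by linarith)) (by positivity)
  have hlhs0 : 0 ≤ (1 - s) * (sη * G1) := by
    apply mul_nonneg (by linarith) (by positivity)
  have hsq : ((1 - s) * (sη * G1)) ^ 2 ≤ (p + q + r) ^ 2 :=
    pow_le_pow_left₀ hlhs0 hlin 2
  have hp2 : p ^ 2 = 2 * s ^ 2 * F := by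
    rw [hp, mul_pow, mul_pow, hs22, hsF2]
  have hq2 : q ^ 2 = s ^ 2 * μ * X ^ 2 := by
    rw [hq, mul_pow, mul_pow, hsμ2]
  have hr2 : r ^ 2 = s ^ 2 * (1 - a) ^ 2 * (η * G2 ^ 2) := by
    rw [hr, mul_pow, mul_pow, mul_pow, hsη2]
  set Q : ℝ := F + μ / 2 * X ^ 2 + s * (1 - a) ^ 2 * (η * G2 ^ 2) with hQ
  have hcauchy : 2 * s * (p + q + r) ^ 2 ≤ 2 * s * ((4 * s ^ 2 + s) * Q) := by
    have hid : 2 * s * ((4 * s ^ 2 + s) * Q) - 2 * s * (p + q + r) ^ 2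
        = 2 * s * (p - q) ^ 2 + (p - 2 * s * r) ^ 2 + (q - 2 * s * r) ^ 2 := by
      have hF' : F = p ^ 2 / (2 * s ^ 2) := by rw [hp2]; field_simp
      have hX' : μ / 2 * X ^ 2 = q ^ 2 / (2 * s ^ 2) := by rw [hq2]; field_simp
      have hG2' : s * (1 - a) ^ 2 * (η * G2 ^ 2) = r ^ 2 / s := by
        rw [hr2]; field_simp
      rw [hQ, hF', hX', hG2']
      field_simp
      ring
    have t1 : (0:ℝ) ≤ 2 * s * (p - q) ^ 2 := by positivity
    linarith only [hid, t1, sq_nonneg (p - 2 * s * r), sq_nonneg (q - 2 * s * r)]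
  have hcauchy' : (p + q + r) ^ 2 ≤ (4 * s ^ 2 + s) * Q := by
    have h2s : (0:ℝ) < 2 * s := by positivity
    exact le_of_mul_le_mul_left (by linarith only [hcauchy]) h2s
  have hQ0 : 0 ≤ Q := by
    rw [hQ]
    have t1 : (0:ℝ) ≤ s * (1 - a) ^ 2 * (η * G2 ^ 2) := by positivity
    have t2 : (0:ℝ) ≤ μ / 2 * X ^ 2 := by positivity
    linarith only [hF0, t1, t2]
  have hT : 4 * s ^ 2 + s ≤ (1 - s) ^ 2 := by
    nlinarith only [hs6, hs0.le, mul_le_mul_of_nonneg_left hs6 hs0.le]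
  have hstep : ((1 - s) * (sη * G1)) ^ 2 = (1 - s) ^ 2 * (η * G1 ^ 2) := by
    rw [mul_pow, mul_pow, hsη2]
  have hmain : (1 - s) ^ 2 * (η * G1 ^ 2) ≤ (1 - s) ^ 2 * Q := by
    calc (1 - s) ^ 2 * (η * G1 ^ 2) = ((1 - s) * (sη * G1)) ^ 2 := hstep.symm
      _ ≤ (p + q + r) ^ 2 := hsq
      _ ≤ (4 * s ^ 2 + s) * Q := hcauchy'
      _ ≤ (1 - s) ^ 2 * Q := mul_le_mul_of_nonneg_right hT hQ0
  have hs1 : (0:ℝ) < (1 - s) ^ 2 := by nlinarith only [hs6, hs0]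
  have hfinal0 : η * G1 ^ 2 ≤ Q := le_of_mul_le_mul_left hmain hs1
  have hbudget : s * (1 - a) ^ 2 * (η * G2 ^ 2)
      ≤ B * η * (1 - a) * (1 - η * Lφ) * G2 ^ 2 := by
    have h1 : s * (1 - a) ^ 2 ≤ s * (1 - a) := by
      have : (1 - a) ^ 2 ≤ (1 - a) := by nlinarith only [ha0.le, ha1.le]
      exact mul_le_mul_of_nonneg_left this hs0.le
    have hle : B * (1 - s ^ 2) ≤ B * (1 - η * Lφ) := by
      apply mul_le_mul_of_nonneg_left _ hB0
      linarith [hηLφ]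
    have hs' : s ≤ B * (1 - η * Lφ) := by linarith only [hBs, hle]
    have h2 : s * (1 - a) ≤ B * (1 - η * Lφ) * (1 - a) :=
      mul_le_mul_of_nonneg_right hs' (by linarith)
    have h3 : s * (1 - a) ^ 2 * (η * G2 ^ 2) ≤ (B * (1 - η * Lφ) * (1 - a)) * (η * G2 ^ 2) :=
      mul_le_mul_of_nonneg_right (le_trans h1 h2) (by positivity)
    calc s * (1 - a) ^ 2 * (η * G2 ^ 2) ≤ (B * (1 - η * Lφ) * (1 - a)) * (η * G2 ^ 2) := h3
      _ = B * η * (1 - a) * (1 - η * Lφ) * G2 ^ 2 := by ring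
  rw [hQ] at hfinal0
  linarith only [hfinal0, hbudget]

set_option maxHeartbeats 2000000 in
/-- Lemma 4.2 / `lem:discretizevalid` of the paper.
Under the NOD setup, for all `k ≥ 2`,
`Ψ_k ≥ (μ/2)‖z̃_k + (1/√(ημ))(z̃_k − z_k) − z⋆‖² + φ̂(z̃_{k−1})
  + (1 − ημ)√(μ/η)‖z̃_{k−1} − z_{k−1}‖²`. -/
theorem nod_lyapunov_lower_bound
    (d : ℕ) (hd : 1 ≤ d) (μ Lφ LS : ℝ) (hμ : 0 < μ) (hLφ : 0 < Lφ) (hLS : 0 < LS)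
    (φ : EuclideanSpace ℝ (Fin d) → ℝ)
    (S : EuclideanSpace ℝ (Fin d) → EuclideanSpace ℝ (Fin d))
    (zstar : EuclideanSpace ℝ (Fin d))
    (hφdiff : Differentiable ℝ φ)
    (hφsc : ∀ u v : EuclideanSpace ℝ (Fin d),
      φ v ≥ φ u + ⟪gradient φ u, v - u⟫ + μ / 2 * ‖v - u‖ ^ 2)
    (hφsmooth : ∀ u v : EuclideanSpace ℝ (Fin d),
      ‖gradient φ u - gradient φ v‖ ≤ Lφ * ‖u - v‖)
    (hSmono : ∀ u v : EuclideanSpace ℝ (Fin d), ⟪S u - S v, u - v⟫ ≥ 0)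
    (hSlip : ∀ u v : EuclideanSpace ℝ (Fin d), ‖S u - S v‖ ≤ LS * ‖u - v‖)
    (hstar : gradient φ zstar + S zstar = 0)
    (C B η : ℝ)
    (hC0 : 0 < C) (hC1 : C < 1)
    (hCeq : 1 - C - Real.sqrt C * (C + 6) = 0)
    (hB : B = Real.sqrt C / (1 - C))
    (hη : 0 < η) (hηle : η ≤ C * min (1 / Lφ) (μ / LS ^ 2))
    (z ztil zhat : ℕ → EuclideanSpace ℝ (Fin d))
    (hinit1 : ztil 0 = z 0) (hinit2 : zhat 0 = z 0)
    (hrec1 : ∀ k : ℕ, z (k + 1) = ztil k - η • (gradient φ (ztil k) + S (zhat k)))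
    (hrec2 : ∀ k : ℕ, ztil (k + 1) = z (k + 1)
      + ((1 - Real.sqrt (η * μ)) / (1 + Real.sqrt (η * μ))) • (z (k + 1) - z k))
    (hrec3 : ∀ k : ℕ, zhat (k + 1) = ztil (k + 1)
      + (1 / Real.sqrt (η * μ) - 1) • (ztil (k + 1) - ztil k))
    (Ψ : ℕ → ℝ)
    (hΨ : ∀ k : ℕ, 2 ≤ k → Ψ k =
      μ * ‖ztil k + (1 / Real.sqrt (η * μ)) • (ztil k - z k) - zstar‖ ^ 2
      + 2 * (φ (ztil (k - 1)) - φ zstar - ⟪gradient φ zstar, ztil (k - 1) - zstar⟫)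
      - η * ‖gradient φ (ztil (k - 1)) + S (zhat (k - 1))‖ ^ 2
      + (1 - η * μ) * Real.sqrt (μ / η) * ‖ztil (k - 1) - z (k - 1)‖ ^ 2
      + B * η * (1 - Real.sqrt (η * μ)) * (1 - η * Lφ)
        * ‖gradient φ (ztil (k - 2)) + S (zhat (k - 2))‖ ^ 2) :
    ∀ k : ℕ, 2 ≤ k → Ψ k ≥
      μ / 2 * ‖ztil k + (1 / Real.sqrt (η * μ)) • (ztil k - z k) - zstar‖ ^ 2
      + (φ (ztil (k - 1)) - φ zstar - ⟪gradient φ zstar, ztil (k - 1) - zstar⟫)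
      + (1 - η * μ) * Real.sqrt (μ / η) * ‖ztil (k - 1) - z (k - 1)‖ ^ 2 := by
  -- global scalar facts
  set s := Real.sqrt C with hsdef
  have hs2 : s ^ 2 = C := Real.sq_sqrt hC0.le
  have hs0 : 0 < s := Real.sqrt_pos.2 hC0
  have hs6 : s ≤ 1 / 6 := by
    have h := hCeq
    rw [← hs2] at h
    nlinarith [h, hs0.le, sq_nonneg s, pow_nonneg hs0.le 3]
  -- μ ≤ Lφ
  have hμLφ : μ ≤ Lφ := by
    set e : EuclideanSpace ℝ (Fin d) := EuclideanSpace.single ⟨0, hd⟩ 1 with he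
    have hne : ‖e‖ = 1 := by rw [he, EuclideanSpace.norm_single]; norm_num
    have h1 := hφsc zstar (zstar + e)
    have h2 := hφsc (zstar + e) zstar
    rw [add_sub_cancel_left] at h1
    have hz : zstar - (zstar + e) = -e := by abel
    rw [hz, inner_neg_right, norm_neg] at h2
    have hA : ⟪gradient φ (zstar + e) - gradient φ zstar, e⟫ ≥ μ := by
      rw [inner_sub_left]
      rw [hne] at h1 h2
      nlinarith [h1, h2]
    have hB' : ⟪gradient φ (zstar + e) - gradient φ zstar, e⟫ ≤ Lφ := by
      calc ⟪gradient φ (zstar + e) - gradient φ zstar, e⟫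
          ≤ ‖gradient φ (zstar + e) - gradient φ zstar‖ * ‖e‖ := real_inner_le_norm _ _
        _ ≤ (Lφ * ‖(zstar + e) - zstar‖) * ‖e‖ :=
            mul_le_mul_of_nonneg_right (hφsmooth _ _) (norm_nonneg _)
        _ = Lφ := by rw [add_sub_cancel_left, hne]; ring
    linarith
  -- step size bounds
  have hη1 : η * Lφ ≤ C := by
    have h1 : η ≤ C * (1 / Lφ) :=
      le_trans hηle (mul_le_mul_of_nonneg_left (min_le_left _ _) hC0.le)
    calc η * Lφ ≤ (C * (1 / Lφ)) * Lφ := mul_le_mul_of_nonneg_right h1 hLφ.le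
      _ = C := by field_simp
  have hη2 : η * LS ^ 2 ≤ C * μ := by
    have h1 : η ≤ C * (μ / LS ^ 2) :=
      le_trans hηle (mul_le_mul_of_nonneg_left (min_le_right _ _) hC0.le)
    have hLS2 : (0:ℝ) < LS ^ 2 := by positivity
    calc η * LS ^ 2 ≤ (C * (μ / LS ^ 2)) * LS ^ 2 := mul_le_mul_of_nonneg_right h1 hLS2.le
      _ = C * μ := by field_simp
  have hημC : η * μ ≤ C :=
    le_trans (mul_le_mul_of_nonneg_left hμLφ hη.le) hη1
  set a := Real.sqrt (η * μ) with hadef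
  have ha2 : a ^ 2 = η * μ := Real.sq_sqrt (by positivity)
  have ha0 : 0 < a := Real.sqrt_pos.2 (by positivity)
  have haS : a ≤ s := Real.sqrt_le_sqrt hημC
  have ha1 : a < 1 := lt_of_le_of_lt (le_trans haS hs6) (by norm_num)
  set sη := Real.sqrt η with hsηdef
  set sμ := Real.sqrt μ with hsμdef
  have hsη2 : sη ^ 2 = η := Real.sq_sqrt hη.le
  have hsμ2 : sμ ^ 2 = μ := Real.sq_sqrt hμ.le
  have hsη0 : 0 < sη := Real.sqrt_pos.2 hη
  have hsμ0 : 0 < sμ := Real.sqrt_pos.2 hμ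
  have haprod : a = sη * sμ := Real.sqrt_mul hη.le μ
  -- main argument
  intro k hk
  obtain ⟨n, rfl⟩ : ∃ n, k = n + 2 := ⟨k - 2, by omega⟩
  have hΨk := hΨ (n + 2) (by omega)
  have hi1 : n + 2 - 1 = n + 1 := by omega
  have hi2 : n + 2 - 2 = n := by omega
  rw [hi1, hi2] at hΨk
  rw [hi1, hΨk]
  set g1 : EuclideanSpace ℝ (Fin d) := gradient φ (ztil (n+1)) + S (zhat (n+1)) with hg1
  set g2 : EuclideanSpace ℝ (Fin d) := gradient φ (ztil n) + S (zhat n) with hg2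
  set w : EuclideanSpace ℝ (Fin d) :=
    ztil (n+2) + (1 / a) • (ztil (n+2) - z (n+2)) - zstar with hwdef
  set F : ℝ := φ (ztil (n+1)) - φ zstar - ⟪gradient φ zstar, ztil (n+1) - zstar⟫ with hF
  -- key vector identity
  have hkey : zhat (n+1) - zstar
      = w + (η / a) • g1 - ((1 - a) * (η / a)) • g2 := by
    have e1 : ztil n = z (n+1) + η • g2 := by rw [hg2, hrec1 n]; abel
    have e2 : z (n+2) = ztil (n+1) - η • g1 := by rw [hg1]; exact hrec1 (n+1)
    have e3 : ztil (n+2) = z (n+2)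
        + ((1 - Real.sqrt (η * μ)) / (1 + Real.sqrt (η * μ))) • (z (n+2) - z (n+1)) :=
      hrec2 (n+1)
    have e4 : zhat (n+1) = ztil (n+1)
        + (1 / Real.sqrt (η * μ) - 1) • (ztil (n+1) - ztil n) := hrec3 n
    rw [e1] at e4
    rw [← hadef] at e3 e4
    rw [hwdef, e4, e3, e2]
    have hane : a ≠ 0 := ne_of_gt ha0
    have h1a : 1 + a ≠ 0 := by positivity
    match_scalars <;> field_simp <;> ring
  -- scalar quantities
  set X : ℝ := ‖w‖ with hX
  set G1 : ℝ := ‖g1‖ with hG1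
  set G2 : ℝ := ‖g2‖ with hG2
  set H : ℝ := ‖zhat (n+1) - zstar‖ with hH
  set N : ℝ := ‖gradient φ (ztil (n+1)) - gradient φ zstar‖ with hN
  have hF0 : 0 ≤ F := by
    have := hφsc zstar (ztil (n+1))
    have hnn : (0:ℝ) ≤ μ / 2 * ‖ztil (n+1) - zstar‖ ^ 2 := by positivity
    rw [hF]; linarith
  have hcoco : N ^ 2 ≤ 2 * Lφ * F := by
    rw [hN, hF]
    exact nod_coco_lemma Lφ μ hLφ hμ.le φ hφdiff hφsc hφsmooth zstar (ztil (n+1))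
  -- triangle inequality for g1
  have hg1tri : G1 ≤ N + LS * H := by
    have hdecomp : g1 = (gradient φ (ztil (n+1)) - gradient φ zstar)
        + (S (zhat (n+1)) - S zstar) := by
      rw [hg1]
      have : (gradient φ (ztil (n+1)) - gradient φ zstar) + (S (zhat (n+1)) - S zstar)
          = (gradient φ (ztil (n+1)) + S (zhat (n+1))) - (gradient φ zstar + S zstar) := by
        abel
      rw [this, hstar, sub_zero]
    calc G1 = ‖(gradient φ (ztil (n+1)) - gradient φ zstar) + (S (zhat (n+1)) - S zstar)‖ := by
          rw [hG1, hdecomp]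
      _ ≤ ‖gradient φ (ztil (n+1)) - gradient φ zstar‖ + ‖S (zhat (n+1)) - S zstar‖ :=
          norm_add_le _ _
      _ ≤ N + LS * H := by
          rw [hN, hH]
          exact add_le_add le_rfl (hSlip _ _)
  -- triangle inequality for zhat − zstar
  have hHtri : H ≤ X + (η / a) * G1 + ((1 - a) * (η / a)) * G2 := by
    have hc1 : (0:ℝ) ≤ η / a := by positivity
    have hc2 : (0:ℝ) ≤ (1 - a) * (η / a) := by
      apply mul_nonneg _ hc1; linarith
    calc H = ‖(w + (η / a) • g1) - ((1 - a) * (η / a)) • g2‖ := by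
          rw [hH, hkey]
      _ ≤ ‖w + (η / a) • g1‖ + ‖((1 - a) * (η / a)) • g2‖ := norm_sub_le _ _
      _ ≤ (‖w‖ + ‖(η / a) • g1‖) + ‖((1 - a) * (η / a)) • g2‖ := by
          exact add_le_add (norm_add_le _ _) le_rfl
      _ = X + (η / a) * G1 + ((1 - a) * (η / a)) * G2 := by
          rw [hX, hG1, hG2, norm_smul, norm_smul, Real.norm_eq_abs, Real.norm_eq_abs,
            abs_of_nonneg hc1, abs_of_nonneg hc2]
  -- nonnegativity
  have hX0 : 0 ≤ X := norm_nonneg _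
  have hG10 : 0 ≤ G1 := norm_nonneg _
  have hG20 : 0 ≤ G2 := norm_nonneg _
  have hH0 : 0 ≤ H := norm_nonneg _
  have hN0 : 0 ≤ N := norm_nonneg _
  have hsqF : (Real.sqrt F) ^ 2 = F := Real.sq_sqrt hF0
  have hsqF0 : 0 ≤ Real.sqrt F := Real.sqrt_nonneg _
  -- A1 : sη * N ≤ √2 * s * √F
  have hA1 : sη * N ≤ Real.sqrt 2 * s * Real.sqrt F := by
    have hsq : (sη * N) ^ 2 ≤ (Real.sqrt 2 * s * Real.sqrt F) ^ 2 := by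
      have e : (Real.sqrt 2 * s * Real.sqrt F) ^ 2 = 2 * C * F := by
        rw [mul_pow, mul_pow, Real.sq_sqrt (by norm_num : (0:ℝ) ≤ 2), hs2, hsqF]
      rw [e, mul_pow, hsη2]
      have t1 := mul_le_mul_of_nonneg_left hcoco hη.le
      have t2 := mul_le_mul_of_nonneg_right hη1 hF0
      linarith only [t1, t2]
    have h1 : (0:ℝ) ≤ sη * N := mul_nonneg hsη0.le hN0
    have h2 : (0:ℝ) ≤ Real.sqrt 2 * s * Real.sqrt F := by positivity
    have := Real.sqrt_le_sqrt hsq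
    rwa [Real.sqrt_sq h1, Real.sqrt_sq h2] at this
  -- A2 : sη * LS ≤ s * sμ
  have hA2 : sη * LS ≤ s * sμ := by
    have hsq : (sη * LS) ^ 2 ≤ (s * sμ) ^ 2 := by
      rw [mul_pow, mul_pow, hsη2, hs2, hsμ2]; exact hη2
    have h1 : (0:ℝ) ≤ sη * LS := by positivity
    have h2 : (0:ℝ) ≤ s * sμ := by positivity
    have := Real.sqrt_le_sqrt hsq
    rwa [Real.sqrt_sq h1, Real.sqrt_sq h2] at this
  -- η/a in terms of square roots
  have hηa : sμ * (η / a) = sη := by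
    rw [haprod, hsη2.symm]
    field_simp
  -- multiply hHtri by sμ
  have hHtri' : sμ * H ≤ sμ * X + sη * G1 + (1 - a) * (sη * G2) := by
    have := mul_le_mul_of_nonneg_left hHtri hsμ0.le
    calc sμ * H ≤ sμ * (X + (η / a) * G1 + ((1 - a) * (η / a)) * G2) := this
      _ = sμ * X + (sμ * (η / a)) * G1 + (1 - a) * ((sμ * (η / a)) * G2) := by ring
      _ = sμ * X + sη * G1 + (1 - a) * (sη * G2) := by rw [hηa]
  -- the linear bound
  have hlin : (1 - s) * (sη * G1)
      ≤ Real.sqrt 2 * s * Real.sqrt F + s * sμ * X + s * (1 - a) * (sη * G2) := by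
    have step1 : sη * G1 ≤ sη * N + (sη * LS) * H := by
      have := mul_le_mul_of_nonneg_left hg1tri hsη0.le
      calc sη * G1 ≤ sη * (N + LS * H) := this
        _ = sη * N + (sη * LS) * H := by ring
    have step2 : (sη * LS) * H ≤ (s * sμ) * H := mul_le_mul_of_nonneg_right hA2 hH0
    have step3 : (s * sμ) * H = s * (sμ * H) := by ring
    have step4 : s * (sμ * H) ≤ s * (sμ * X + sη * G1 + (1 - a) * (sη * G2)) :=
      mul_le_mul_of_nonneg_left hHtri' hs0.le
    linarith only [hA1, step1, step2, step3, step4]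
  have hBval : B * (1 - C) = s := by
    have h1C : (1:ℝ) - C ≠ 0 := by linarith
    rw [hB]; field_simp
  have hB0 : 0 ≤ B := by
    rw [hB]
    apply div_nonneg (Real.sqrt_nonneg _) (by linarith)
  have hfinal : η * G1 ^ 2 ≤ F + μ / 2 * X ^ 2 + B * η * (1 - a) * (1 - η * Lφ) * G2 ^ 2 := by
    apply nod_scalar_lemma s a η μ Lφ B F X G1 G2 sη sμ (Real.sqrt F) (Real.sqrt 2)
      hs0 hs6 ha0 ha1 hη hμ (by rw [hs2]; exact hη1) (by rw [hs2]; exact hBval) hB0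
      hF0 hX0 hG10 hG20 hsη2 hsμ2 hsqF (Real.sq_sqrt (by norm_num)) hsη0.le hsμ0.le
      hsqF0 (Real.sqrt_nonneg _) hlin
  linarith only [hfinal]
end

section
/- Let d ≥ 1, L > 0, let A : ℝ^d → ℝ^d be monotone and L-Lipschitz, and let k : ℝ^d → ℝ be convex. Suppose that for all z₁, z₂ ∈ ℝ^d and all g₁, g₂ ∈ ℝ^d such that g₁ is a subgradient of k at z₁ and g₂ is a subgradient of k at z₂, one has ⟨(A(z₁) − g₁) − (A(z₂) − g₂), z₁ − z₂⟩ ≥ 0 (i.e., A − ∂k is monotone). Then k is differentiable at every point of ℝ^d and its gradient map z ↦ ∇k(z) is L-Lipschitz. -/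
open scoped RealInnerProductSpace

lemma exists_subgradient_aux {E : Type*} [NormedAddCommGroup E] [InnerProductSpace ℝ E]
    [FiniteDimensional ℝ E] (k : E → ℝ) (hk : ConvexOn ℝ Set.univ k) (z : E) :
    ∃ g : E, ∀ w, k w ≥ k z + ⟪g, w - z⟫ := by
  have hcont : Continuous k := by
    have h := hk.continuousOn isOpen_univ
    rwa [continuousOn_univ] at h
  set S : Set (E × ℝ) := {p | k p.1 < p.2} with hS
  have hSopen : IsOpen S := isOpen_lt (hcont.comp continuous_fst) continuous_snd
  have hSconv : Convex ℝ S := by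
    intro p hp q hq a b ha hb hab
    simp only [hS, Set.mem_setOf_eq] at hp hq ⊢
    have hk2 := hk.2 (Set.mem_univ p.1) (Set.mem_univ q.1) ha hb hab
    have h1 : (a • p + b • q).1 = a • p.1 + b • q.1 := rfl
    have h2 : (a • p + b • q).2 = a * p.2 + b * q.2 := rfl
    rw [h1, h2]
    rcases eq_or_lt_of_le ha with h | h
    · have hb1 : b = 1 := by linarith
      simp only [← h, hb1] at *
      simpa using hq
    · have : a * k p.1 < a * p.2 := by exact (mul_lt_mul_iff_right₀ h).2 hp
      have : b * k q.1 ≤ b * q.2 := mul_le_mul_of_nonneg_left hq.le hb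
      calc k (a • p.1 + b • q.1) ≤ a * k p.1 + b * k q.1 := by simpa using hk2
        _ < a * p.2 + b * q.2 := by nlinarith [(mul_lt_mul_iff_right₀ h).2 hp, mul_le_mul_of_nonneg_left hq.le hb]
  have hzS : ((z, k z) : E × ℝ) ∉ S := by simp [hS]
  obtain ⟨f, hf⟩ := geometric_hahn_banach_open_point hSconv hSopen hzS
  set c := f ((0 : E), (1 : ℝ)) with hcdef
  have key : ∀ (x : E) (t : ℝ), f (x, t) = f (x, 0) + t * c := by
    intro x t
    have h : ((x, t) : E × ℝ) = (x, 0) + t • ((0 : E), (1 : ℝ)) := by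
      simp [Prod.ext_iff]
    rw [h, map_add, map_smul, smul_eq_mul]
  have hc : c < 0 := by
    have h1 : ((z, k z + 1) : E × ℝ) ∈ S := by simp [hS]
    have h2 := hf _ h1
    rw [key z (k z + 1), key z (k z)] at h2
    linarith
  have hcne : c ≠ 0 := hc.ne
  have hle : ∀ x : E, f (x, 0) + k x * c ≤ f (z, 0) + k z * c := by
    intro x
    by_contra h
    push_neg at h
    set ε := ((f (z, 0) + k z * c) - (f (x, 0) + k x * c)) / c with hε
    have hεpos : 0 < ε := div_pos_of_neg_of_neg (by linarith) hc
    have hmem : ((x, k x + ε) : E × ℝ) ∈ S := by simp [hS]; linarith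
    have h2 := hf _ hmem
    rw [key x (k x + ε), key z (k z)] at h2
    have hεc : ε * c = (f (z, 0) + k z * c) - (f (x, 0) + k x * c) :=
      div_mul_cancel₀ _ hcne
    nlinarith
  refine ⟨(InnerProductSpace.toDual ℝ E).symm
    ((-c)⁻¹ • (f.comp (ContinuousLinearMap.inl ℝ E ℝ))), ?_⟩
  intro w
  rw [InnerProductSpace.toDual_symm_apply]
  have happ : ((-c)⁻¹ • (f.comp (ContinuousLinearMap.inl ℝ E ℝ))) (w - z)
      = (-c)⁻¹ * (f (w, 0) - f (z, 0)) := by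
    have h1 : ((w - z : E), (0 : ℝ)) = ((w, 0) : E × ℝ) - (z, 0) := by
      simp [Prod.ext_iff]
    simp only [ContinuousLinearMap.smul_apply, ContinuousLinearMap.comp_apply,
      ContinuousLinearMap.inl_apply, smul_eq_mul]
    rw [h1, map_sub]
  rw [happ]
  have h2 : f (w, 0) - f (z, 0) ≤ (k z - k w) * c := by linarith [hle w]
  have h3 : (0:ℝ) < (-c)⁻¹ := inv_pos.mpr (by linarith)
  have h4 := mul_le_mul_of_nonneg_left h2 h3.le
  have h5 : (-c)⁻¹ * ((k z - k w) * c) = k w - k z := by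
    rw [← div_eq_inv_mul, div_eq_iff (show -c ≠ 0 by linarith)]; ring
  linarith

set_option maxHeartbeats 2000000 in
/-- Lemma A.1 / `lem:kissmooth` of the paper.
If `A` is monotone and `L`-Lipschitz, `k` is convex, and `A − ∂k` is monotone,
then `k` is differentiable everywhere and its gradient is `L`-Lipschitz. -/
theorem smooth_of_monotone_residual
    (d : ℕ) (hd : 1 ≤ d) (L : ℝ) (hL : 0 < L)
    (A : EuclideanSpace ℝ (Fin d) → EuclideanSpace ℝ (Fin d))
    (hAmono : ∀ u v : EuclideanSpace ℝ (Fin d), ⟪A u - A v, u - v⟫ ≥ 0)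
    (hAlip : ∀ u v : EuclideanSpace ℝ (Fin d), ‖A u - A v‖ ≤ L * ‖u - v‖)
    (k : EuclideanSpace ℝ (Fin d) → ℝ)
    (hkconvex : ConvexOn ℝ Set.univ k)
    (hmono : ∀ z₁ z₂ g₁ g₂ : EuclideanSpace ℝ (Fin d),
      (∀ w, k w ≥ k z₁ + ⟪g₁, w - z₁⟫) →
      (∀ w, k w ≥ k z₂ + ⟪g₂, w - z₂⟫) →
      ⟪(A z₁ - g₁) - (A z₂ - g₂), z₁ - z₂⟫ ≥ 0) :
    Differentiable ℝ k ∧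
      ∀ u v : EuclideanSpace ℝ (Fin d), ‖gradient k u - gradient k v‖ ≤ L * ‖u - v‖ := by
  classical
  choose sg hsg using fun z => exists_subgradient_aux k hkconvex z
  -- Residual monotonicity gives a one-sided Lipschitz bound on subgradients.
  have hstar : ∀ z₁ z₂ g₁ g₂ : EuclideanSpace ℝ (Fin d),
      (∀ w, k w ≥ k z₁ + ⟪g₁, w - z₁⟫) →
      (∀ w, k w ≥ k z₂ + ⟪g₂, w - z₂⟫) →
      ⟪g₁ - g₂, z₁ - z₂⟫ ≤ L * ‖z₁ - z₂‖ ^ 2 := by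
    intro z₁ z₂ g₁ g₂ h1 h2
    have h0 := hmono z₁ z₂ g₁ g₂ h1 h2
    have hsplit : ⟪(A z₁ - g₁) - (A z₂ - g₂), z₁ - z₂⟫
        = ⟪A z₁ - A z₂, z₁ - z₂⟫ - ⟪g₁ - g₂, z₁ - z₂⟫ := by
      simp only [inner_sub_left]; ring
    have hcs := real_inner_le_norm (A z₁ - A z₂) (z₁ - z₂)
    have hlip := mul_le_mul_of_nonneg_right (hAlip z₁ z₂) (norm_nonneg (z₁ - z₂))
    nlinarith [h0]
  -- Quadratic upper bound (descent lemma).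
  have hquad : ∀ (z g : EuclideanSpace ℝ (Fin d)), (∀ w, k w ≥ k z + ⟪g, w - z⟫) →
      ∀ w, k w ≤ k z + ⟪g, w - z⟫ + L / 2 * ‖w - z‖ ^ 2 := by
    intro z g hg w
    set u := w - z with hu
    have stepA : ∀ s t : ℝ,
        k (z + s • u) ≤ k (z + t • u) + (s - t) * ⟪sg (z + s • u), u⟫ := by
      intro s t
      have h := hsg (z + s • u) (z + t • u)
      have he : (z + t • u) - (z + s • u) = (t - s) • u := by module
      rw [he, real_inner_smul_right] at h
      nlinarith [h]
    have stepB : ∀ t : ℝ, 0 < t → ⟪sg (z + t • u), u⟫ ≤ ⟪g, u⟫ + L * t * ‖u‖ ^ 2 := by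
      intro t ht
      have h := hstar (z + t • u) z (sg (z + t • u)) g (hsg _) hg
      have he : (z + t • u) - z = t • u := by module
      rw [he, real_inner_smul_right, inner_sub_left, norm_smul, Real.norm_eq_abs,
        abs_of_pos ht] at h
      nlinarith [h, ht]
    have hind : ∀ δ : ℝ, 0 < δ → ∀ i : ℕ,
        k (z + ((i : ℝ) * δ) • u) ≤ k z + ((i : ℝ) * δ) * ⟪g, u⟫
          + (L * ‖u‖ ^ 2) * δ ^ 2 * ((i : ℝ) * ((i : ℝ) + 1)) / 2 := by
      intro δ hδ i
      induction i with
      | zero => simp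
      | succ i ih =>
        have hA := stepA (((i : ℝ) + 1) * δ) ((i : ℝ) * δ)
        have hB := stepB (((i : ℝ) + 1) * δ) (by positivity)
        have hB' := mul_le_mul_of_nonneg_left hB hδ.le
        push_cast
        nlinarith [ih, hA, hB']
    have hn : ∀ n : ℕ, 0 < n →
        k w ≤ k z + ⟪g, u⟫ + (L * ‖u‖ ^ 2) * (((n : ℝ) + 1) / (2 * n)) := by
      intro n hn
      have hnR : (0 : ℝ) < n := by exact_mod_cast hn
      have h := hind (1 / n) (by positivity) n
      have he1 : ((n : ℝ)) * (1 / n) = 1 := by field_simp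
      rw [he1, one_smul] at h
      have he2 : z + u = w := by rw [hu]; abel
      rw [he2] at h
      have he3 : (L * ‖u‖ ^ 2) * (1 / (n : ℝ)) ^ 2 * ((n : ℝ) * ((n : ℝ) + 1)) / 2
          = (L * ‖u‖ ^ 2) * (((n : ℝ) + 1) / (2 * n)) := by
        field_simp
      linarith [h, he3.le, he3.ge]
    have hfin : k w ≤ k z + ⟪g, u⟫ + L / 2 * ‖u‖ ^ 2 := by
      refine le_of_forall_pos_le_add ?_
      intro ε hε
      obtain ⟨n, hn1⟩ := exists_nat_gt ((L * ‖u‖ ^ 2) / (2 * ε))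
      have hn0 : 0 < n + 1 := Nat.succ_pos n
      have h := hn (n + 1) hn0
      have hnR : (0 : ℝ) < (n : ℝ) + 1 := by positivity
      have hQ : 0 ≤ L * ‖u‖ ^ 2 := by positivity
      have hlt : (L * ‖u‖ ^ 2) / (2 * ε) < (n : ℝ) + 1 := by
        have : (n : ℝ) < (n : ℝ) + 1 := by linarith
        linarith [hn1]
      have hkey : (L * ‖u‖ ^ 2) * ((((n : ℝ) + 1) + 1) / (2 * ((n : ℝ) + 1)))
          ≤ L / 2 * ‖u‖ ^ 2 + ε := by
        rw [div_lt_iff₀ (by positivity : (0 : ℝ) < 2 * ε)] at hlt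
        rw [mul_div_assoc] at *
        have h2 : (L * ‖u‖ ^ 2) * ((((n : ℝ) + 1) + 1) / (2 * ((n : ℝ) + 1)))
            = L / 2 * ‖u‖ ^ 2 + (L * ‖u‖ ^ 2) / (2 * ((n : ℝ) + 1)) := by
          field_simp
        rw [h2]
        have h3 : (L * ‖u‖ ^ 2) / (2 * ((n : ℝ) + 1)) ≤ ε := by
          rw [div_le_iff₀ (by positivity : (0 : ℝ) < 2 * ((n : ℝ) + 1))]
          nlinarith [hlt, hε]
        linarith
      push_cast at h
      linarith [h, hkey]
    exact hfin
  -- Differentiability with gradient `sg`.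
  have hgrad : ∀ x, HasGradientAt k (sg x) x := by
    intro x
    rw [hasGradientAt_iff_isLittleO, Asymptotics.isLittleO_iff]
    intro c hc
    rw [Metric.eventually_nhds_iff]
    refine ⟨2 * c / L, by positivity, ?_⟩
    intro y hy
    rw [dist_eq_norm] at hy
    have h1 := hsg x y
    have h2 := hquad x (sg x) (hsg x) y
    have hnn : 0 ≤ k y - k x - ⟪sg x, y - x⟫ := by linarith [h1]
    rw [Real.norm_eq_abs, abs_of_nonneg hnn]
    have hyL : ‖y - x‖ * L < 2 * c := (lt_div_iff₀ hL).1 hy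
    nlinarith [h2, hyL, norm_nonneg (y - x), hL]
  -- Cocoercivity.
  have hco : ∀ a b : EuclideanSpace ℝ (Fin d),
      ‖sg b - sg a‖ ^ 2 ≤ 2 * L * (k b - k a - ⟪sg a, b - a⟫) := by
    intro a b
    set dd := sg b - sg a with hdd
    set w := b - (1 / L) • dd with hw
    have h1 := hsg a w
    have h2 := hquad b (sg b) (hsg b) w
    have hwb : w - b = -((1 / L) • dd) := by rw [hw]; module
    have hwa : w - a = (b - a) - (1 / L) • dd := by rw [hw]; module
    rw [hwb, inner_neg_right, real_inner_smul_right, norm_neg, norm_smul, Real.norm_eq_abs,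
      abs_of_pos (by positivity : (0 : ℝ) < 1 / L)] at h2
    rw [hwa, inner_sub_right, real_inner_smul_right] at h1
    have hdd2 : ⟪sg b, dd⟫ - ⟪sg a, dd⟫ = ‖dd‖ ^ 2 := by
      rw [← inner_sub_left, ← hdd, real_inner_self_eq_norm_sq]
    have h3 : (1 / L) * ⟪sg b, dd⟫ - (1 / L) * ⟪sg a, dd⟫ = (1 / L) * ‖dd‖ ^ 2 := by
      rw [← mul_sub, hdd2]
    have key : L / 2 * ((1 / L) * ‖dd‖) ^ 2 = (1 / L) * ‖dd‖ ^ 2 / 2 := by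
      field_simp
    rw [key] at h2
    have hineq : (1 / L) * ‖dd‖ ^ 2 / 2 ≤ k b - k a - ⟪sg a, b - a⟫ := by
      linarith [h1, h2, h3]
    have hmul := mul_le_mul_of_nonneg_left hineq (by positivity : (0 : ℝ) ≤ 2 * L)
    have hfin : 2 * L * ((1 / L) * ‖dd‖ ^ 2 / 2) = ‖dd‖ ^ 2 := by
      field_simp
    linarith [hmul, hfin.le, hfin.ge]
  refine ⟨fun x => (hgrad x).differentiableAt, ?_⟩
  intro u v
  rw [(hgrad u).gradient, (hgrad v).gradient]
  have hA := hco u v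
  have hB := hco v u
  have hcs := real_inner_le_norm (sg u - sg v) (u - v)
  have hsum : ⟪sg u, v - u⟫ + ⟪sg v, u - v⟫ = -⟪sg u - sg v, u - v⟫ := by
    simp only [inner_sub_left, inner_sub_right]; ring
  have hrev2 : ‖sg v - sg u‖ ^ 2 = ‖sg u - sg v‖ ^ 2 := by rw [norm_sub_rev]
  have hcs2 := mul_le_mul_of_nonneg_left hcs (by positivity : (0 : ℝ) ≤ 2 * L)
  rcases eq_or_lt_of_le (norm_nonneg (sg u - sg v)) with h0 | h0
  · rw [← h0]; positivity
  · nlinarith [hA, hB, hcs2, hsum, hrev2, h0, norm_nonneg (u - v)]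
end

section
/- Let k : ℝ² → ℝ be convex and differentiable everywhere, let x₀ ≤ x₁ and y₀ ≤ y₁ be real numbers, and suppose there exists v ∈ ℝ² such that ∇k(x, y) = v for every point (x, y) on the boundary of the axis-aligned rectangle [x₀, x₁] × [y₀, y₁] (i.e., every (x, y) in the rectangle with x ∈ {x₀, x₁} or y ∈ {y₀, y₁}). Then ∇k(x, y) = v for every (x, y) ∈ [x₀, x₁] × [y₀, y₁]. -/
open scoped RealInnerProductSpace

open Filter Topology Set in
/-- First-order condition: a stationary point of a convex differentiable function
is a global minimum. -/
lemma convex_stationary_isMin {E : Type*} [NormedAddCommGroup E] [NormedSpace ℝ E]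
    {g : E → ℝ} (hc : ConvexOn ℝ Set.univ g) {a : E} (hd : DifferentiableAt ℝ g a)
    (h0 : fderiv ℝ g a = 0) (x : E) : g a ≤ g x := by
  set φ : ℝ → E := fun t => a + t • (x - a) with hφ
  have hline : HasDerivAt φ (x - a) 0 := by
    have h := ((hasDerivAt_id (0 : ℝ)).smul_const (x - a)).const_add a
    rw [one_smul] at h
    exact h
  have hcomp : HasDerivAt (fun t => g (φ t)) (fderiv ℝ g a (x - a)) 0 := by
    have h1 : HasFDerivAt g (fderiv ℝ g a) (φ 0) := by
      simpa [hφ] using hd.hasFDerivAt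
    exact h1.comp_hasDerivAt 0 hline
  have hslope : Tendsto (slope (fun t => g (φ t)) 0) (𝓝[>] 0)
      (𝓝 (fderiv ℝ g a (x - a))) :=
    (hasDerivAt_iff_tendsto_slope.mp hcomp).mono_left
      (nhdsWithin_mono 0 (fun t ht => ne_of_gt ht))
  have hbound : ∀ t ∈ Set.Ioc (0 : ℝ) 1, slope (fun t => g (φ t)) 0 t ≤ g x - g a := by
    intro t ht
    have hφt : φ t = (1 - t) • a + t • x := by
      simp only [hφ]
      module
    have hcv : g (φ t) ≤ (1 - t) * g a + t * g x := by
      rw [hφt]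
      exact hc.2 (Set.mem_univ a) (Set.mem_univ x) (by linarith [ht.2]) ht.1.le (by ring)
    have hφ0 : φ 0 = a := by simp [hφ]
    have h1 : g (φ t) - g (φ 0) ≤ t * (g x - g a) := by rw [hφ0]; nlinarith
    rw [slope_def_field, sub_zero, div_le_iff₀ ht.1]
    linarith
  have hle : fderiv ℝ g a (x - a) ≤ g x - g a := by
    refine le_of_tendsto hslope ?_
    filter_upwards [Ioc_mem_nhdsGT_of_mem (by constructor <;> norm_num : (0:ℝ) ∈ Set.Ico 0 1)]
      with t ht using hbound t ht
  rw [h0] at hle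
  simpa using hle

/-- Lemma A.2 / `lem:box-constant` of the paper.
If a convex differentiable `k : ℝ² → ℝ` has constant gradient `v` on the boundary of
an axis-aligned rectangle, then its gradient equals `v` on the whole rectangle. -/
theorem gradient_constant_on_rectangle
    (k : EuclideanSpace ℝ (Fin 2) → ℝ)
    (hkconvex : ConvexOn ℝ Set.univ k)
    (hkdiff : Differentiable ℝ k)
    (x₀ x₁ y₀ y₁ : ℝ) (hx : x₀ ≤ x₁) (hy : y₀ ≤ y₁)
    (v : EuclideanSpace ℝ (Fin 2))
    (hbd : ∀ p : EuclideanSpace ℝ (Fin 2),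
      p 0 ∈ Set.Icc x₀ x₁ → p 1 ∈ Set.Icc y₀ y₁ →
      (p 0 = x₀ ∨ p 0 = x₁ ∨ p 1 = y₀ ∨ p 1 = y₁) →
      gradient k p = v) :
    ∀ p : EuclideanSpace ℝ (Fin 2),
      p 0 ∈ Set.Icc x₀ x₁ → p 1 ∈ Set.Icc y₀ y₁ → gradient k p = v := by
  intro p hp0 hp1
  set T : EuclideanSpace ℝ (Fin 2) →L[ℝ] ℝ :=
    InnerProductSpace.toDual ℝ (EuclideanSpace ℝ (Fin 2)) v with hT
  set g : EuclideanSpace ℝ (Fin 2) → ℝ := fun z => k z - T z with hg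
  have hgdiff : Differentiable ℝ g := hkdiff.sub T.differentiable
  have hgconvex : ConvexOn ℝ Set.univ g := by
    refine ⟨convex_univ, fun a _ b _ s t hs ht hst => ?_⟩
    have h1 := hkconvex.2 (Set.mem_univ a) (Set.mem_univ b) hs ht hst
    have h2 : T (s • a + t • b) = s * T a + t * T b := by
      simp [map_add, map_smul, smul_eq_mul]
    simp only [hg, smul_eq_mul] at *
    rw [h2]; linarith
  have hfd : ∀ z : EuclideanSpace ℝ (Fin 2), fderiv ℝ g z = fderiv ℝ k z - T := by
    intro z
    rw [hg]
    rw [fderiv_fun_sub (hkdiff z) T.differentiableAt, T.fderiv]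
  have key : ∀ z : EuclideanSpace ℝ (Fin 2), gradient k z = v ↔ fderiv ℝ g z = 0 := by
    intro z
    rw [hfd z, sub_eq_zero]
    unfold gradient
    constructor
    · intro h
      rw [← LinearIsometryEquiv.apply_symm_apply
        (InnerProductSpace.toDual ℝ (EuclideanSpace ℝ (Fin 2))) (fderiv ℝ k z), h, hT]
    · intro h
      rw [h, hT, LinearIsometryEquiv.symm_apply_apply]
  -- endpoints of the horizontal segment through p
  by_cases hxx : x₁ = x₀
  · exact hbd p hp0 hp1 (Or.inl (le_antisymm (hxx ▸ hp0.2) hp0.1))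
  have hxlt : x₀ < x₁ := lt_of_le_of_ne hx (Ne.symm hxx)
  set b : EuclideanSpace ℝ (Fin 2) := WithLp.toLp 2 (fun i : Fin 2 => if i = 0 then x₀ else p 1) with hb
  set c : EuclideanSpace ℝ (Fin 2) := WithLp.toLp 2 (fun i : Fin 2 => if i = 0 then x₁ else p 1) with hc
  have hb0 : b 0 = x₀ := rfl
  have hb1 : b 1 = p 1 := rfl
  have hc0 : c 0 = x₁ := rfl
  have hc1 : c 1 = p 1 := rfl
  have hgb : fderiv ℝ g b = 0 := (key b).mp <| hbd b
    (by rw [hb0]; exact ⟨le_refl _, hx⟩) (by rw [hb1]; exact hp1) (Or.inl hb0)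
  have hgc : fderiv ℝ g c = 0 := (key c).mp <| hbd c
    (by rw [hc0]; exact ⟨hx, le_refl _⟩) (by rw [hc1]; exact hp1) (Or.inr (Or.inl hc0))
  have hminb := convex_stationary_isMin hgconvex (hgdiff b) hgb
  have hminc := convex_stationary_isMin hgconvex (hgdiff c) hgc
  have hbc : g b = g c := le_antisymm (hminb c) (hminc b)
  -- p lies on the segment [b, c]
  set s : ℝ := (p 0 - x₀) / (x₁ - x₀) with hs
  have hx0 : (0:ℝ) < x₁ - x₀ := by linarith
  have hs0 : 0 ≤ s := div_nonneg (by linarith [hp0.1]) hx0.le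
  have hs1 : s ≤ 1 := by
    rw [hs, div_le_one hx0]; linarith [hp0.2]
  have hpseg : p = (1 - s) • b + s • c := by
    ext i
    fin_cases i
    · show p 0 = (1 - s) * b 0 + s * c 0
      rw [hb0, hc0, hs]
      field_simp
      ring
    · show p 1 = (1 - s) * b 1 + s * c 1
      rw [hb1, hc1]; ring
  have hcvp : g p ≤ g b := by
    rw [hpseg]
    calc g ((1 - s) • b + s • c) ≤ (1 - s) * g b + s * g c :=
          hgconvex.2 (Set.mem_univ b) (Set.mem_univ c) (by linarith) hs0 (by ring)
      _ = g b := by rw [← hbc]; ring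
  have hgp : ∀ x : EuclideanSpace ℝ (Fin 2), g p ≤ g x := fun x => le_trans hcvp (hminb x)
  have hloc : IsLocalMin g p := Filter.Eventually.of_forall hgp
  exact (key p).mpr (hloc.fderiv_eq_zero)
end

section
/- Define S : ℝ² → ℝ² by S(x, y) = (cos x · sin y + ∫₀ˣ |sin t| dt, − sin x · cos y + ∫₀ʸ |sin t| dt). Let k : ℝ² → ℝ be convex and let G : ℝ² → ℝ² be a map such that for every z ∈ ℝ², G(z) is a subgradient of k at z, and suppose S − G is monotone, i.e., ⟨(S(z) − G(z)) − (S(z') − G(z')), z − z'⟩ ≥ 0 for all z, z' ∈ ℝ². Then k is affine: there exist a ∈ ℝ² and c ∈ ℝ such that k(z) = ⟨a, z⟩ + c for all z ∈ ℝ². -/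
open scoped RealInnerProductSpace

/-- The acyclic component `S` of the Asplund decomposition of the saddle gradient of
`L(x,y) = x² − y² + sin x sin y`. -/
noncomputable def asplundS : EuclideanSpace ℝ (Fin 2) → EuclideanSpace ℝ (Fin 2) :=
  fun p => (WithLp.equiv 2 (Fin 2 → ℝ)).symm
    ![Real.cos (p 0) * Real.sin (p 1) + ∫ t in (0:ℝ)..(p 0), |Real.sin t|,
      -(Real.sin (p 0)) * Real.cos (p 1) + ∫ t in (0:ℝ)..(p 1), |Real.sin t|]

namespace Aspl

open Real intervalIntegral

/-! ### The antiderivative of `|sin|` -/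

noncomputable def A (x : ℝ) : ℝ := ∫ t in (0:ℝ)..x, |Real.sin t|

lemma intAbsSin (a b : ℝ) : IntervalIntegrable (fun t => |Real.sin t|) MeasureTheory.volume a b :=
  (Real.continuous_sin.abs).intervalIntegrable a b

lemma absSinPeriodic : Function.Periodic (fun t => |Real.sin t|) π := by
  intro t; simp [Real.sin_add_pi]

lemma A_base {s : ℝ} (h0 : 0 ≤ s) (h1 : s ≤ π) : A s = 1 - Real.cos s := by
  have : ∀ t ∈ Set.uIcc (0:ℝ) s, |Real.sin t| = Real.sin t := by
    intro t ht
    rw [Set.uIcc_of_le h0] at ht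
    exact abs_of_nonneg (Real.sin_nonneg_of_nonneg_of_le_pi ht.1 (le_trans ht.2 h1))
  rw [A, intervalIntegral.integral_congr this, integral_sin, Real.cos_zero]

lemma A_add_pi (x : ℝ) : A (x + π) = A x + 2 := by
  have h1 : A (x + π) = A x + ∫ t in x..(x+π), |Real.sin t| := by
    rw [A, A, intervalIntegral.integral_add_adjacent_intervals (intAbsSin 0 x) (intAbsSin x (x+π))]
  have h2 : (∫ t in x..(x+π), |Real.sin t|) = ∫ t in (0:ℝ)..(0+π), |Real.sin t| :=
    absSinPeriodic.intervalIntegral_add_eq x 0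
  have h3 : A π = 1 - Real.cos π := A_base Real.pi_pos.le le_rfl
  rw [h1, h2]
  rw [Real.cos_pi] at h3
  have : (∫ t in (0:ℝ)..(0+π), |Real.sin t|) = A π := by rw [A]; norm_num
  rw [this, h3]; ring

lemma A_int_pi (i : ℤ) : A (i * π) = 2 * i := by
  induction i using Int.induction_on with
  | zero => simp [A]
  | succ n ih =>
      push_cast at ih ⊢
      have e : ((n:ℝ)+1) * π = (n:ℝ) * π + π := by ring
      rw [e, A_add_pi, ih]; ring
  | pred n ih =>
      push_cast at ih ⊢
      have e : (-(n:ℝ)) * π = (-(n:ℝ) - 1) * π + π := by ring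
      rw [e, A_add_pi] at ih
      linarith

lemma A_eval (i : ℤ) {s : ℝ} (h0 : 0 ≤ s) (h1 : s ≤ π) :
    A (i * π + s) = 2 * i + 1 - Real.cos s := by
  have h1' : A (i * π + s) = A (i*π) + ∫ t in ((i:ℝ)*π)..(i*π+s), |Real.sin t| := by
    rw [A, A, intervalIntegral.integral_add_adjacent_intervals (intAbsSin _ _) (intAbsSin _ _)]
  have h2 : (∫ t in ((i:ℝ)*π)..(i*π+s), |Real.sin t|) = ∫ t in (0:ℝ)..s, |Real.sin (t + i*π)| := by
    rw [intervalIntegral.integral_comp_add_right (fun t => |Real.sin t|) ((i:ℝ)*π)]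
    norm_num [add_comm]
  have h3 : ∀ t : ℝ, |Real.sin (t + i*π)| = |Real.sin t| := by
    intro t
    rw [Real.sin_add_int_mul_pi, abs_mul]
    have : |((-1:ℝ))^i| = 1 := by
      rcases Int.even_or_odd i with he | ho
      · rw [he.neg_one_zpow]; norm_num
      · rw [Odd.neg_one_zpow ho]; norm_num
    rw [this, one_mul]
  have h4 : (∫ t in (0:ℝ)..s, |Real.sin (t + i*π)|) = A s := by
    rw [A]; congr 1; funext t; exact h3 t
  rw [h1', h2, h4, A_base h0 h1, A_int_pi]; ring

lemma A_lip (x y : ℝ) : |A x - A y| ≤ |x - y| := by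
  have : A x - A y = ∫ t in y..x, |Real.sin t| := by
    rw [A, A, ← intervalIntegral.integral_interval_sub_left (intAbsSin 0 x) (intAbsSin 0 y)]
  rw [this]
  have := intervalIntegral.norm_integral_le_of_norm_le_const (C := 1)
    (f := fun t => |Real.sin t|) (a := y) (b := x) ?_
  · simpa [Real.norm_eq_abs, abs_sub_comm x y] using this
  · intro t ht
    simp [abs_abs, Real.norm_eq_abs]
    exact Real.abs_sin_le_one t

/-! ### The map `S` in coordinates -/

noncomputable def S1 (x y : ℝ) : ℝ := Real.cos x * Real.sin y + A x
noncomputable def S2 (x y : ℝ) : ℝ := -Real.sin x * Real.cos y + A y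

lemma abs_sin_sub_sin (a b : ℝ) : |Real.sin a - Real.sin b| ≤ |a - b| := by
  rw [Real.sin_sub_sin, abs_mul, abs_mul]
  have h1 : |Real.sin ((a-b)/2)| ≤ |(a-b)/2| := Real.abs_sin_le_abs
  have h2 : |Real.cos ((a+b)/2)| ≤ 1 := Real.abs_cos_le_one _
  have h3 : |(a-b)/2| = |a-b|/2 := by rw [abs_div]; norm_num
  calc |(2:ℝ)| * |Real.sin ((a-b)/2)| * |Real.cos ((a+b)/2)|
      ≤ |(2:ℝ)| * |(a-b)/2| * 1 := by
        apply mul_le_mul _ h2 (abs_nonneg _) (by positivity)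
        exact mul_le_mul_of_nonneg_left h1 (abs_nonneg _)
    _ ≤ |a - b| := by rw [h3]; rw [abs_two]; linarith [abs_nonneg (a-b)]

lemma abs_cos_sub_cos (a b : ℝ) : |Real.cos a - Real.cos b| ≤ |a - b| := by
  rw [Real.cos_sub_cos]
  rw [abs_mul, abs_mul]
  have h1 : |Real.sin ((a-b)/2)| ≤ |(a-b)/2| := Real.abs_sin_le_abs
  have h2 : |Real.sin ((a+b)/2)| ≤ 1 := Real.abs_sin_le_one _
  have h3 : |(a-b)/2| = |a-b|/2 := by rw [abs_div]; norm_num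
  calc |(-2:ℝ)| * |Real.sin ((a+b)/2)| * |Real.sin ((a-b)/2)|
      ≤ |(-2:ℝ)| * 1 * |(a-b)/2| := by
        apply mul_le_mul _ h1 (abs_nonneg _) (by positivity)
        exact mul_le_mul_of_nonneg_left h2 (abs_nonneg _)
    _ ≤ |a - b| := by rw [h3, abs_neg, abs_two]; linarith [abs_nonneg (a-b)]

lemma S1_lip (x y x' y' : ℝ) : |S1 x y - S1 x' y'| ≤ 2*|x-x'| + |y-y'| := by
  have e : S1 x y - S1 x' y' =
      (Real.cos x - Real.cos x') * Real.sin y + Real.cos x' * (Real.sin y - Real.sin y')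
        + (A x - A x') := by unfold S1; ring
  rw [e]
  have h1 : |(Real.cos x - Real.cos x') * Real.sin y| ≤ |x - x'| := by
    rw [abs_mul]
    calc |Real.cos x - Real.cos x'| * |Real.sin y| ≤ |x-x'| * 1 :=
      mul_le_mul (abs_cos_sub_cos x x') (Real.abs_sin_le_one y) (abs_nonneg _) (abs_nonneg _)
    _ = |x-x'| := by ring
  have h2 : |Real.cos x' * (Real.sin y - Real.sin y')| ≤ |y - y'| := by
    rw [abs_mul]
    calc |Real.cos x'| * |Real.sin y - Real.sin y'| ≤ 1 * |y-y'| :=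
      mul_le_mul (Real.abs_cos_le_one x') (abs_sin_sub_sin y y') (abs_nonneg _) zero_le_one
    _ = |y-y'| := by ring
  have h3 := A_lip x x'
  calc |(Real.cos x - Real.cos x') * Real.sin y + Real.cos x' * (Real.sin y - Real.sin y') + (A x - A x')|
      ≤ |(Real.cos x - Real.cos x') * Real.sin y + Real.cos x' * (Real.sin y - Real.sin y')| + |A x - A x'| := abs_add_le _ _
    _ ≤ (|(Real.cos x - Real.cos x') * Real.sin y| + |Real.cos x' * (Real.sin y - Real.sin y')|) + |A x - A x'| := by
        have := abs_add_le ((Real.cos x - Real.cos x') * Real.sin y) (Real.cos x' * (Real.sin y - Real.sin y'))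
        linarith
    _ ≤ 2*|x-x'| + |y-y'| := by linarith

lemma S2_lip (x y x' y' : ℝ) : |S2 x y - S2 x' y'| ≤ |x-x'| + 2*|y-y'| := by
  have e : S2 x y - S2 x' y' =
      -((Real.sin x - Real.sin x') * Real.cos y) + (-Real.sin x') * (Real.cos y - Real.cos y')
        + (A y - A y') := by unfold S2; ring
  rw [e]
  have h1 : |-((Real.sin x - Real.sin x') * Real.cos y)| ≤ |x - x'| := by
    rw [abs_neg, abs_mul]
    calc |Real.sin x - Real.sin x'| * |Real.cos y| ≤ |x-x'| * 1 :=
      mul_le_mul (abs_sin_sub_sin x x') (Real.abs_cos_le_one y) (abs_nonneg _) (abs_nonneg _)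
    _ = |x-x'| := by ring
  have h2 : |(-Real.sin x') * (Real.cos y - Real.cos y')| ≤ |y - y'| := by
    rw [abs_mul, abs_neg]
    calc |Real.sin x'| * |Real.cos y - Real.cos y'| ≤ 1 * |y-y'| :=
      mul_le_mul (Real.abs_sin_le_one x') (abs_cos_sub_cos y y') (abs_nonneg _) zero_le_one
    _ = |y-y'| := by ring
  have h3 := A_lip y y'
  calc |-((Real.sin x - Real.sin x') * Real.cos y) + (-Real.sin x') * (Real.cos y - Real.cos y') + (A y - A y')|
      ≤ |-((Real.sin x - Real.sin x') * Real.cos y) + (-Real.sin x') * (Real.cos y - Real.cos y')| + |A y - A y'| := abs_add_le _ _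
    _ ≤ (|-((Real.sin x - Real.sin x') * Real.cos y)| + |(-Real.sin x') * (Real.cos y - Real.cos y')|) + |A y - A y'| := by
        have := abs_add_le (-((Real.sin x - Real.sin x') * Real.cos y)) ((-Real.sin x') * (Real.cos y - Real.cos y'))
        linarith
    _ ≤ |x-x'| + 2*|y-y'| := by linarith

lemma sigma_quad (x y x' y' : ℝ) :
    (S1 x y - S1 x' y')*(x-x') + (S2 x y - S2 x' y')*(y-y') ≤ 3*((x-x')^2 + (y-y')^2) := by
  have h1 := S1_lip x y x' y'
  have h2 := S2_lip x y x' y'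
  have a1 : (S1 x y - S1 x' y')*(x-x') ≤ (2*|x-x'| + |y-y'|) * |x-x'| := by
    calc (S1 x y - S1 x' y')*(x-x') ≤ |(S1 x y - S1 x' y')*(x-x')| := le_abs_self _
    _ = |S1 x y - S1 x' y'| * |x-x'| := abs_mul _ _
    _ ≤ (2*|x-x'| + |y-y'|) * |x-x'| := mul_le_mul_of_nonneg_right h1 (abs_nonneg _)
  have a2 : (S2 x y - S2 x' y')*(y-y') ≤ (|x-x'| + 2*|y-y'|) * |y-y'| := by
    calc (S2 x y - S2 x' y')*(y-y') ≤ |(S2 x y - S2 x' y')*(y-y')| := le_abs_self _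
    _ = |S2 x y - S2 x' y'| * |y-y'| := abs_mul _ _
    _ ≤ (|x-x'| + 2*|y-y'|) * |y-y'| := mul_le_mul_of_nonneg_right h2 (abs_nonneg _)
  have sq1 : |x-x'|^2 = (x-x')^2 := sq_abs _
  have sq2 : |y-y'|^2 = (y-y')^2 := sq_abs _
  nlinarith [sq_nonneg (|x-x'| - |y-y'|), abs_nonneg (x-x'), abs_nonneg (y-y')]

/-! ### Exact values of `S1`, `S2` on the null structure -/

lemma neg_one_zpow_two_mul (n : ℤ) : ((-1:ℝ))^(2*n) = 1 := by
  rw [zpow_mul]; norm_num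

lemma sin_line (j : ℤ) : Real.sin (π/2 + j*π) = (-1)^j := by
  rw [Real.sin_add_int_mul_pi, Real.sin_pi_div_two, mul_one]

lemma S1_null (j n : ℤ) {x : ℝ} (h0 : ((j+2*n:ℤ):ℝ)*π ≤ x) (h1 : x ≤ ((j+2*n:ℤ):ℝ)*π + π) :
    S1 x (π/2 + j*π) = 2*(j+2*n:ℤ) + 1 := by
  have hA : A x = 2*(j+2*n:ℤ) + 1 - Real.cos (x - (j+2*n:ℤ)*π) := by
    have := A_eval (j+2*n) (s := x - ((j+2*n:ℤ):ℝ)*π) (by linarith) (by linarith)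
    convert this using 2 <;> push_cast <;> ring
  have hcos : Real.cos (x - ((j+2*n:ℤ):ℝ)*π) = (-1)^(j+2*n) * Real.cos x :=
    Real.cos_sub_int_mul_pi x (j+2*n)
  have hpow : ((-1:ℝ))^(j+2*n) = (-1)^j := by
    rw [zpow_add₀ (by norm_num : (-1:ℝ) ≠ 0), neg_one_zpow_two_mul, mul_one]
  unfold S1
  rw [hA, sin_line]
  push_cast at hcos ⊢
  rw [hcos, hpow]
  ring

lemma S2_null (j m : ℤ) {y : ℝ} (h0 : ((j+1+2*m:ℤ):ℝ)*π ≤ y) (h1 : y ≤ ((j+1+2*m:ℤ):ℝ)*π + π) :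
    S2 (π/2 + j*π) y = 2*(j+1+2*m:ℤ) + 1 := by
  have hA : A y = 2*(j+1+2*m:ℤ) + 1 - Real.cos (y - (j+1+2*m:ℤ)*π) := by
    have := A_eval (j+1+2*m) (s := y - ((j+1+2*m:ℤ):ℝ)*π) (by linarith) (by linarith)
    convert this using 2 <;> push_cast <;> ring
  have hcos : Real.cos (y - ((j+1+2*m:ℤ):ℝ)*π) = (-1)^(j+1+2*m) * Real.cos y :=
    Real.cos_sub_int_mul_pi y (j+1+2*m)
  have hpow : ((-1:ℝ))^(j+1+2*m) = -(-1)^j := by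
    rw [show j+1+2*m = j + (1 + 2*m) by ring, zpow_add₀ (by norm_num : (-1:ℝ) ≠ 0)]
    rw [zpow_add₀ (by norm_num : (-1:ℝ) ≠ 0), neg_one_zpow_two_mul]
    norm_num
  unfold S2
  rw [hA, sin_line]
  push_cast at hcos ⊢
  rw [hcos, hpow]
  ring

lemma A_cross (i : ℤ) {d : ℝ} (h0 : 0 ≤ d) (h1 : d ≤ π) :
    A (i*π+d) - A (i*π-d) = 2 - 2*Real.cos d := by
  have e1 : A ((i:ℝ)*π+d) = 2*i + 1 - Real.cos d := A_eval i h0 h1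
  have e2 : A ((i:ℝ)*π-d) = 2*(i-1:ℤ) + 1 - Real.cos (π - d) := by
    have := A_eval (i-1) (s := π - d) (by linarith) (by linarith)
    convert this using 2 <;> push_cast <;> ring
  rw [e1, e2, Real.cos_pi_sub]
  push_cast; ring

lemma S1_cross (i : ℤ) {d : ℝ} (h0 : 0 ≤ d) (h1 : d ≤ π) (y : ℝ) :
    S1 ((i:ℝ)*π+d) y - S1 ((i:ℝ)*π-d) y = 2 - 2*Real.cos d := by
  have c1 : Real.cos ((i:ℝ)*π+d) = (-1)^i * Real.cos d := by
    rw [add_comm]; exact Real.cos_add_int_mul_pi d i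
  have c2 : Real.cos ((i:ℝ)*π-d) = (-1)^i * Real.cos d := Real.cos_int_mul_pi_sub d i
  unfold S1
  rw [c1, c2]
  have := A_cross i h0 h1
  linarith [this]

lemma S2_cross (i : ℤ) {d : ℝ} (h0 : 0 ≤ d) (h1 : d ≤ π) (x : ℝ) :
    S2 x ((i:ℝ)*π+d) - S2 x ((i:ℝ)*π-d) = 2 - 2*Real.cos d := by
  have c1 : Real.cos ((i:ℝ)*π+d) = (-1)^i * Real.cos d := by
    rw [add_comm]; exact Real.cos_add_int_mul_pi d i
  have c2 : Real.cos ((i:ℝ)*π-d) = (-1)^i * Real.cos d := Real.cos_int_mul_pi_sub d i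
  unfold S2
  rw [c1, c2]
  have := A_cross i h0 h1
  linarith [this]

/-! ### Abstract convex-analytic core -/

section Core

variable (K U V : ℝ → ℝ → ℝ)

/-- Bregman gap of the subgradient inequality. -/
def dlt (x y x' y' : ℝ) : ℝ := K x' y' - K x y - U x y * (x'-x) - V x y * (y'-y)

def Hsub : Prop := ∀ x y x' y', 0 ≤ dlt K U V x y x' y'

def Hquad : Prop := ∀ x y x' y', dlt K U V x y x' y' ≤ 3*((x'-x)^2 + (y'-y)^2)

def Hmono (U V : ℝ → ℝ → ℝ) : Prop := ∀ x y x' y',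
  (U x y - U x' y')*(x-x') + (V x y - V x' y')*(y-y')
    ≤ (S1 x y - S1 x' y')*(x-x') + (S2 x y - S2 x' y')*(y-y')

variable {K U V}

lemma dlt_pair (x y x' y' : ℝ) :
    dlt K U V x y x' y' + dlt K U V x' y' x y
      = (U x y - U x' y')*(x-x') + (V x y - V x' y')*(y-y') := by
  unfold dlt; ring

/-- monotonicity of the subgradient selection -/
lemma Emono (hs : Hsub K U V) (x y x' y' : ℝ) :
    0 ≤ (U x y - U x' y')*(x-x') + (V x y - V x' y')*(y-y') := by
  rw [← dlt_pair (K := K)]; exact add_nonneg (hs _ _ _ _) (hs _ _ _ _)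

lemma dlt_le_sigma (hs : Hsub K U V) (hm : Hmono U V) (x y x' y' : ℝ) :
    dlt K U V x y x' y' ≤ (S1 x y - S1 x' y')*(x-x') + (S2 x y - S2 x' y')*(y-y') := by
  have h1 := hs x' y' x y
  have h2 := hm x y x' y'
  rw [← dlt_pair (K := K)] at h2
  linarith

lemma Hquad_of (hs : Hsub K U V) (hm : Hmono U V) : Hquad K U V := by
  intro x y x' y'
  have h1 := dlt_le_sigma hs hm x y x' y'
  have h2 := sigma_quad x y x' y'
  have e : 3*((x-x')^2 + (y-y')^2) = 3*((x'-x)^2 + (y'-y)^2) := by ring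
  linarith

lemma cocoer (hs : Hsub K U V) (hq : Hquad K U V) (x y x' y' : ℝ) :
    (U x' y' - U x y)^2 + (V x' y' - V x y)^2 ≤ 12 * dlt K U V x y x' y' := by
  have h1 := hs x y (x' - (U x' y' - U x y)/6) (y' - (V x' y' - V x y)/6)
  have h2 := hq x' y' (x' - (U x' y' - U x y)/6) (y' - (V x' y' - V x y)/6)
  unfold dlt at h1 h2 ⊢
  nlinarith [h1, h2]

lemma Glip (hs : Hsub K U V) (hq : Hquad K U V) (x y x' y' : ℝ) :
    (U x' y' - U x y)^2 + (V x' y' - V x y)^2 ≤ 36 * ((x'-x)^2 + (y'-y)^2) := by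
  have := cocoer hs hq x y x' y'
  have h2 := hq x y x' y'
  linarith

lemma mono_x (hs : Hsub K U V) {x x' : ℝ} (y : ℝ) (hxx : x ≤ x') : U x y ≤ U x' y := by
  rcases eq_or_lt_of_le hxx with rfl | hlt
  · exact le_rfl
  · have h := Emono hs x' y x y
    simp only [sub_self, mul_zero, add_zero] at h
    nlinarith [h]

lemma mono_y (hs : Hsub K U V) {y y' : ℝ} (x : ℝ) (hyy : y ≤ y') : V x y ≤ V x y' := by
  rcases eq_or_lt_of_le hyy with rfl | hlt
  · exact le_rfl
  · have h := Emono hs x y' x y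
    simp only [sub_self, mul_zero, add_zero] at h
    nlinarith [h]

lemma abs_le_of_sq_le {a b : ℝ} (hb : 0 ≤ b) (h : a^2 ≤ b^2) : |a| ≤ b := by
  nlinarith [abs_nonneg a, sq_abs a]

/-- equality of `G` on exact null pairs -/
lemma null_pair (hs : Hsub K U V) (hq : Hquad K U V) {x y x' y' : ℝ}
    (hσ : (S1 x y - S1 x' y')*(x-x') + (S2 x y - S2 x' y')*(y-y') ≤ 0)
    (hm : Hmono U V) :
    U x y = U x' y' ∧ V x y = V x' y' := by
  have hE := Emono hs x y x' y'
  have hE2 := hm x y x' y'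
  have h1 := hs x y x' y'
  have h2 := hs x' y' x y
  have hEeq : dlt K U V x y x' y' + dlt K U V x' y' x y ≤ 0 := by
    rw [dlt_pair (K := K)]; linarith
  have hd0 : dlt K U V x y x' y' = 0 := by linarith
  have := cocoer hs hq x y x' y'
  rw [hd0] at this
  constructor <;> nlinarith [sq_nonneg (U x' y' - U x y), sq_nonneg (V x' y' - V x y)]

end Core

/-! ### The discretized loop estimate -/

section Loop

variable {K U V : ℝ → ℝ → ℝ}

lemma tele_vert (hs : Hsub K U V) (hq : Hquad K U V) (x c : ℝ) (e : ℝ) (N : ℕ) :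
    (∑ j ∈ Finset.range N, V x (c + j*e)) * e
      ≤ K x (c + N*e) - K x c ∧
    K x (c + N*e) - K x c
      ≤ (∑ j ∈ Finset.range N, V x (c + j*e)) * e + 3*N*e^2 := by
  have tele := Finset.sum_range_sub (f := fun j => K x (c + j*e)) N
  constructor
  · have bound : ∀ j ∈ Finset.range N,
        V x (c + j*e) * e ≤ K x (c + ((j+1:ℕ):ℝ)*e) - K x (c + j*e) := by
      intro j _
      have := hs x (c + j*e) x (c + ((j+1:ℕ):ℝ)*e)
      unfold dlt at this
      push_cast at this ⊢
      nlinarith [this]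
    have := Finset.sum_le_sum bound
    rw [tele] at this
    simp only [Nat.cast_zero, zero_mul, add_zero] at this
    calc (∑ j ∈ Finset.range N, V x (c + j*e)) * e
        = ∑ j ∈ Finset.range N, V x (c + j*e) * e := by rw [Finset.sum_mul]
      _ ≤ K x (c + N*e) - K x c := this
  · have bound : ∀ j ∈ Finset.range N,
        K x (c + ((j+1:ℕ):ℝ)*e) - K x (c + j*e) ≤ V x (c + j*e) * e + 3*e^2 := by
      intro j _
      have := hq x (c + j*e) x (c + ((j+1:ℕ):ℝ)*e)
      unfold dlt at this
      push_cast at this ⊢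
      nlinarith [this]
    have hsum := Finset.sum_le_sum bound
    rw [tele] at hsum
    simp only [Nat.cast_zero, zero_mul, add_zero] at hsum
    have e2 : ∑ j ∈ Finset.range N, (V x (c + j*e) * e + 3*e^2)
        = (∑ j ∈ Finset.range N, V x (c + j*e)) * e + 3*N*e^2 := by
      rw [Finset.sum_add_distrib, Finset.sum_const, Finset.card_range, Finset.sum_mul]
      ring
    rw [e2] at hsum
    exact hsum

lemma step_horiz (hs : Hsub K U V) (hq : Hquad K U V) (x x' y : ℝ) :
    U x y * (x' - x) ≤ K x' y - K x y ∧ K x' y - K x y ≤ U x y * (x' - x) + 3*(x'-x)^2 := by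
  constructor
  · have := hs x y x' y; unfold dlt at this; nlinarith [this]
  · have := hq x y x' y; unfold dlt at this; nlinarith [this]

set_option maxHeartbeats 1000000 in
lemma loop (hs : Hsub K U V) (hq : Hquad K U V)
    (xL xR yb H κ : ℝ) (hH : 0 < H) (hκ : 0 ≤ κ)
    (hcross : ∀ y, yb ≤ y → y ≤ yb + H → |V xR y - V xL y| ≤ κ)
    (N : ℕ) (hN : 0 < N) :
    |(U xL (yb+H) - U xR yb) * (xR - xL)| ≤ 6*(xR-xL)^2 + 12*H^2/N + H*κ := by
  have hNR : (0:ℝ) < N := by exact_mod_cast hN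
  have hh0 : 0 < H / (N:ℝ) := div_pos hH hNR
  set h : ℝ := H / N with hh
  have hNh : (N:ℝ) * h = H := by rw [hh]; field_simp
  obtain ⟨l_lo, l_hi⟩ := tele_vert hs hq xL yb h N
  obtain ⟨r_lo, r_hi⟩ := tele_vert hs hq xR (yb+H) (-h) N
  obtain ⟨t_lo, t_hi⟩ := step_horiz hs hq xL xR (yb+H)
  obtain ⟨b_lo, b_hi⟩ := step_horiz hs hq xR xL yb
  rw [hNh] at l_lo l_hi
  have hNh' : (N:ℝ) * (-h) = -H := by rw [← hNh]; ring
  rw [hNh'] at r_lo r_hi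
  have hyH : yb + H + -H = yb := by ring
  rw [hyH] at r_lo r_hi
  have hnegsq : 3*(N:ℝ)*(-h)^2 = 3*N*h^2 := by ring
  rw [hnegsq] at r_hi
  have reindex : (∑ j ∈ Finset.range N, V xR (yb + H + j*(-h)))
      = (∑ j ∈ Finset.range N, V xR (yb + j*h)) + V xR (yb + N*h) - V xR (yb + (0:ℝ)*h) := by
    have e1 : ∀ j ∈ Finset.range N, V xR (yb + H + j*(-h)) = V xR (yb + ((N:ℝ) - j)*h) := by
      intro j _
      congr 1
      rw [← hNh]; ring
    rw [Finset.sum_congr rfl e1]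
    have e2 : (∑ j ∈ Finset.range N, V xR (yb + ((N:ℝ) - j)*h))
        = ∑ j ∈ Finset.range N, V xR (yb + ((j:ℝ)+1)*h) := by
      rw [← Finset.sum_range_reflect (f := fun j => V xR (yb + ((j:ℝ)+1)*h)) N]
      apply Finset.sum_congr rfl
      intro j hj
      rw [Finset.mem_range] at hj
      congr 2
      have hc : ((N - 1 - j : ℕ) : ℝ) = (N:ℝ) - 1 - j := by
        have h1 : j ≤ N - 1 := Nat.le_sub_one_of_lt hj
        rw [Nat.cast_sub h1, Nat.cast_sub (by omega : 1 ≤ N)]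
        push_cast; ring
      rw [hc]; ring
    rw [e2]
    have s1 := Finset.sum_range_succ' (fun j => V xR (yb + (j:ℝ)*h)) N
    have s2 := Finset.sum_range_succ (fun j => V xR (yb + (j:ℝ)*h)) N
    have e4 : ∀ j ∈ Finset.range N, V xR (yb + ((j+1:ℕ):ℝ)*h) = V xR (yb + ((j:ℝ)+1)*h) := by
      intro j _; congr 2; push_cast; ring
    rw [Finset.sum_congr rfl e4] at s1
    have e5 : V xR (yb + ((0:ℕ):ℝ)*h) = V xR (yb + (0:ℝ)*h) := by norm_num
    rw [e5] at s1
    rw [s2] at s1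
    linarith [s1]
  have hdiff : |(∑ j ∈ Finset.range N, V xL (yb + j*h)) - (∑ j ∈ Finset.range N, V xR (yb + j*h))|
      ≤ (N:ℝ) * κ := by
    rw [← Finset.sum_sub_distrib]
    calc |∑ j ∈ Finset.range N, (V xL (yb + j*h) - V xR (yb + j*h))|
        ≤ ∑ j ∈ Finset.range N, |V xL (yb + j*h) - V xR (yb + j*h)| := Finset.abs_sum_le_sum_abs _ _
      _ ≤ ∑ _j ∈ Finset.range N, κ := by
          apply Finset.sum_le_sum
          intro j hj
          rw [Finset.mem_range] at hj
          rw [abs_sub_comm]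
          apply hcross
          · nlinarith [Nat.cast_nonneg (α := ℝ) j, hh0.le]
          · have hjN : (j:ℝ) ≤ (N:ℝ) := by exact_mod_cast hj.le
            nlinarith [hh0.le]
      _ = (N:ℝ) * κ := by rw [Finset.sum_const, Finset.card_range]; push_cast; ring
  have hd := abs_le.mp hdiff
  have hd1 : h * ((∑ j ∈ Finset.range N, V xL (yb + j*h)) - (∑ j ∈ Finset.range N, V xR (yb + j*h)))
      ≤ h * ((N:ℝ)*κ) := mul_le_mul_of_nonneg_left hd.2 hh0.le
  have hd2 : h * (-((N:ℝ)*κ))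
      ≤ h * ((∑ j ∈ Finset.range N, V xL (yb + j*h)) - (∑ j ∈ Finset.range N, V xR (yb + j*h))) :=
    mul_le_mul_of_nonneg_left hd.1 hh0.le
  have hVlip : |V xR (yb + N*h) - V xR (yb + (0:ℝ)*h)| ≤ 6*H := by
    apply abs_le_of_sq_le (by linarith)
    have hg := Glip hs hq xR (yb + (0:ℝ)*h) xR (yb + N*h)
    have e6 : (yb + (N:ℝ)*h - (yb + (0:ℝ)*h))^2 = H^2 := by rw [hNh]; ring
    rw [e6] at hg
    nlinarith [hg, sq_nonneg (U xR (yb + N*h) - U xR (yb + (0:ℝ)*h))]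
  have hv := abs_le.mp hVlip
  have hv1 : h * (V xR (yb + N*h) - V xR (yb + (0:ℝ)*h)) ≤ h * (6*H) :=
    mul_le_mul_of_nonneg_left hv.2 hh0.le
  have hv2 : h * (-(6*H)) ≤ h * (V xR (yb + N*h) - V xR (yb + (0:ℝ)*h)) :=
    mul_le_mul_of_nonneg_left hv.1 hh0.le
  have conv1 : 12*H^2/N = 12*(N:ℝ)*h^2 := by
    rw [← hNh]; field_simp
  have conv2 : H*κ = h*((N:ℝ)*κ) := by rw [← hNh]; ring
  rw [abs_le]
  constructor
  · rw [conv1, conv2]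
    nlinarith [l_lo, l_hi, r_lo, r_hi, t_lo, t_hi, b_lo, b_hi, reindex, hd1, hd2, hv1, hv2, hh0.le, sq_nonneg (xR-xL)]
  · rw [conv1, conv2]
    nlinarith [l_lo, l_hi, r_lo, r_hi, t_lo, t_hi, b_lo, b_hi, reindex, hd1, hd2, hv1, hv2, hh0.le, sq_nonneg (xR-xL)]

/-- reflected version of `loop` (opposite pair of corners). -/
lemma loop2 (hs : Hsub K U V) (hq : Hquad K U V)
    (xL xR yb H κ : ℝ) (hH : 0 < H) (hκ : 0 ≤ κ)
    (hcross : ∀ y, yb ≤ y → y ≤ yb + H → |V xR y - V xL y| ≤ κ)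
    (N : ℕ) (hN : 0 < N) :
    |(U xR (yb+H) - U xL yb) * (xR - xL)| ≤ 6*(xR-xL)^2 + 12*H^2/N + H*κ := by
  have hs' : Hsub (fun a b => K (-a) b) (fun a b => -U (-a) b) (fun a b => V (-a) b) := by
    intro x y x' y'
    have := hs (-x) y (-x') y'
    unfold dlt at this ⊢
    simp only
    nlinarith [this]
  have hq' : Hquad (fun a b => K (-a) b) (fun a b => -U (-a) b) (fun a b => V (-a) b) := by
    intro x y x' y'
    have := hq (-x) y (-x') y'
    unfold dlt at this ⊢
    simp only
    nlinarith [this]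
  have hcross' : ∀ y, yb ≤ y → y ≤ yb + H →
      |(fun a b => V (-a) b) (-xL) y - (fun a b => V (-a) b) (-xR) y| ≤ κ := by
    intro y h1 h2
    simp only [neg_neg]
    rw [abs_sub_comm]
    exact hcross y h1 h2
  have := loop hs' hq' (-xR) (-xL) yb H κ hH hκ hcross' N hN
  simp only [neg_neg] at this
  have e1 : (-U xR (yb+H) - -U xL yb) * (-xL - -xR) = -((U xR (yb+H) - U xL yb) * (xR - xL)) := by ring
  rw [e1, abs_neg] at this
  have e2 : (-xL - -xR)^2 = (xR - xL)^2 := by ring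
  rw [e2] at this
  exact this

/-- coordinate-swapped version of `loop` (for vertical rectangles). -/
lemma loopV (hs : Hsub K U V) (hq : Hquad K U V)
    (yL yR xb H κ : ℝ) (hH : 0 < H) (hκ : 0 ≤ κ)
    (hcross : ∀ x, xb ≤ x → x ≤ xb + H → |U x yR - U x yL| ≤ κ)
    (N : ℕ) (hN : 0 < N) :
    |(V (xb+H) yL - V xb yR) * (yR - yL)| ≤ 6*(yR-yL)^2 + 12*H^2/N + H*κ := by
  have hs' : Hsub (fun a b => K b a) (fun a b => V b a) (fun a b => U b a) := by
    intro x y x' y'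
    have := hs y x y' x'
    unfold dlt at this ⊢
    simp only
    nlinarith [this]
  have hq' : Hquad (fun a b => K b a) (fun a b => V b a) (fun a b => U b a) := by
    intro x y x' y'
    have := hq y x y' x'
    unfold dlt at this ⊢
    simp only
    nlinarith [this]
  have hcross' : ∀ y, xb ≤ y → y ≤ xb + H →
      |(fun a b => U b a) yR y - (fun a b => U b a) yL y| ≤ κ := by
    intro y h1 h2
    simp only
    exact hcross y h1 h2
  have := loop hs' hq' yL yR xb H κ hH hκ hcross' N hN
  exact this

/-- coordinate-swapped version of `loop2`. -/
lemma loopV2 (hs : Hsub K U V) (hq : Hquad K U V)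
    (yL yR xb H κ : ℝ) (hH : 0 < H) (hκ : 0 ≤ κ)
    (hcross : ∀ x, xb ≤ x → x ≤ xb + H → |U x yR - U x yL| ≤ κ)
    (N : ℕ) (hN : 0 < N) :
    |(V (xb+H) yR - V xb yL) * (yR - yL)| ≤ 6*(yR-yL)^2 + 12*H^2/N + H*κ := by
  have hs' : Hsub (fun a b => K b a) (fun a b => V b a) (fun a b => U b a) := by
    intro x y x' y'
    have := hs y x y' x'
    unfold dlt at this ⊢
    simp only
    nlinarith [this]
  have hq' : Hquad (fun a b => K b a) (fun a b => V b a) (fun a b => U b a) := by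
    intro x y x' y'
    have := hq y x y' x'
    unfold dlt at this ⊢
    simp only
    nlinarith [this]
  have hcross' : ∀ y, xb ≤ y → y ≤ xb + H →
      |(fun a b => U b a) yR y - (fun a b => U b a) yL y| ≤ κ := by
    intro y h1 h2
    simp only
    exact hcross y h1 h2
  have := loop2 hs' hq' yL yR xb H κ hH hκ hcross' N hN
  exact this

end Loop

/-! ### Limit helpers -/

lemma nat_limit {a b d : ℝ} (hd : 0 ≤ d) (h : ∀ N : ℕ, 0 < N → a ≤ b + d/N) : a ≤ b := by
  by_contra hab
  push_neg at hab
  obtain ⟨N, hN⟩ := exists_nat_gt (d/(a-b))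
  have hN0 : 0 < N := by
    by_contra h0
    push_neg at h0
    interval_cases N
    simp at hN
    nlinarith [div_nonneg hd (le_of_lt (sub_pos.mpr hab))]
  have hNR : (0:ℝ) < N := by exact_mod_cast hN0
  have := h N hN0
  have hdn : d / N < a - b := by
    rw [div_lt_iff₀ hNR]
    rw [div_lt_iff₀ (sub_pos.mpr hab)] at hN
    nlinarith [hN]
  linarith

lemma sqrt_limit {a : ℝ} (h : ∀ δ : ℝ, 0 < δ → δ ≤ 1 → a ≤ 20*Real.sqrt δ) : a ≤ 0 := by
  by_contra ha
  push_neg at ha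
  have hδ0 : 0 < min 1 ((a/21)^2) := by
    apply lt_min one_pos
    positivity
  have hδ1 : min 1 ((a/21)^2) ≤ 1 := min_le_left _ _
  have := h _ hδ0 hδ1
  have hsq : Real.sqrt (min 1 ((a/21)^2)) ≤ Real.sqrt ((a/21)^2) :=
    Real.sqrt_le_sqrt (min_le_right _ _)
  rw [Real.sqrt_sq (by positivity)] at hsq
  nlinarith [this, hsq]

/-! ### Null segments and crossing bounds, concretely -/

section Concrete

variable {K U V : ℝ → ℝ → ℝ}

lemma one_le_pi : (1:ℝ) ≤ π := by linarith [Real.pi_gt_three]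

/-- `G` is constant (both components) on horizontal null segments. -/
lemma segH (hs : Hsub K U V) (hm : Hmono U V) (j n : ℤ) {x x' : ℝ}
    (hx0 : ((j+2*n:ℤ):ℝ)*π ≤ x) (hx1 : x ≤ ((j+2*n:ℤ):ℝ)*π+π)
    (hx0' : ((j+2*n:ℤ):ℝ)*π ≤ x') (hx1' : x' ≤ ((j+2*n:ℤ):ℝ)*π+π) :
    U x (π/2 + (j:ℝ)*π) = U x' (π/2 + (j:ℝ)*π) ∧
    V x (π/2 + (j:ℝ)*π) = V x' (π/2 + (j:ℝ)*π) := by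
  have hq := Hquad_of hs hm
  apply null_pair hs hq _ hm
  have e1 : S1 x (π/2 + (j:ℝ)*π) = 2*(j+2*n:ℤ) + 1 := S1_null j n hx0 hx1
  have e2 : S1 x' (π/2 + (j:ℝ)*π) = 2*(j+2*n:ℤ) + 1 := S1_null j n hx0' hx1'
  rw [e1, e2]
  simp

/-- `G` is constant (both components) on vertical null segments. -/
lemma segV (hs : Hsub K U V) (hm : Hmono U V) (j m : ℤ) {y y' : ℝ}
    (hy0 : ((j+1+2*m:ℤ):ℝ)*π ≤ y) (hy1 : y ≤ ((j+1+2*m:ℤ):ℝ)*π+π)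
    (hy0' : ((j+1+2*m:ℤ):ℝ)*π ≤ y') (hy1' : y' ≤ ((j+1+2*m:ℤ):ℝ)*π+π) :
    U (π/2 + (j:ℝ)*π) y = U (π/2 + (j:ℝ)*π) y' ∧
    V (π/2 + (j:ℝ)*π) y = V (π/2 + (j:ℝ)*π) y' := by
  have hq := Hquad_of hs hm
  apply null_pair hs hq _ hm
  have e1 : S2 (π/2 + (j:ℝ)*π) y = 2*(j+1+2*m:ℤ) + 1 := S2_null j m hy0 hy1
  have e2 : S2 (π/2 + (j:ℝ)*π) y' = 2*(j+1+2*m:ℤ) + 1 := S2_null j m hy0' hy1'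
  rw [e1, e2]
  simp

lemma crossH_bound (hs : Hsub K U V) (hm : Hmono U V) (i : ℤ) {δ : ℝ}
    (h0 : 0 < δ) (h1 : δ ≤ 1) (y : ℝ) :
    |V ((i:ℝ)*π+δ) y - V ((i:ℝ)*π-δ) y| ≤ 5*δ*Real.sqrt δ := by
  have hq := Hquad_of hs hm
  have hδπ : δ ≤ π := le_trans h1 one_le_pi
  have hσ := dlt_le_sigma hs hm ((i:ℝ)*π-δ) y ((i:ℝ)*π+δ) y
  have e1 : S1 ((i:ℝ)*π+δ) y - S1 ((i:ℝ)*π-δ) y = 2 - 2*Real.cos δ := S1_cross i h0.le hδπ y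
  have hσ2 : dlt K U V ((i:ℝ)*π-δ) y ((i:ℝ)*π+δ) y ≤ (2 - 2*Real.cos δ) * (2*δ) := by
    have e2 : (S1 ((i:ℝ)*π-δ) y - S1 ((i:ℝ)*π+δ) y)*((((i:ℝ)*π-δ)) - ((i:ℝ)*π+δ))
        + (S2 ((i:ℝ)*π-δ) y - S2 ((i:ℝ)*π+δ) y)*(y-y) = (2 - 2*Real.cos δ) * (2*δ) := by
      have : S1 ((i:ℝ)*π-δ) y - S1 ((i:ℝ)*π+δ) y = -(2 - 2*Real.cos δ) := by linarith [e1]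
      rw [this]; ring
    linarith [hσ, e2.ge, e2.le]
  have hcc := cocoer hs hq ((i:ℝ)*π-δ) y ((i:ℝ)*π+δ) y
  have hcos : 2 - 2*Real.cos δ ≤ δ^2 := by
    have := Real.one_sub_sq_div_two_le_cos (x := δ)
    linarith
  apply abs_le_of_sq_le (by positivity)
  have hsq : (5*δ*Real.sqrt δ)^2 = 25*δ^2*δ := by
    have : (Real.sqrt δ)^2 = δ := Real.sq_sqrt h0.le
    nlinarith [this]
  rw [hsq]
  nlinarith [hcc, hσ2, hcos, sq_nonneg (U ((i:ℝ)*π+δ) y - U ((i:ℝ)*π-δ) y)]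

lemma crossV_bound (hs : Hsub K U V) (hm : Hmono U V) (i : ℤ) {δ : ℝ}
    (h0 : 0 < δ) (h1 : δ ≤ 1) (x : ℝ) :
    |U x ((i:ℝ)*π+δ) - U x ((i:ℝ)*π-δ)| ≤ 5*δ*Real.sqrt δ := by
  have hq := Hquad_of hs hm
  have hδπ : δ ≤ π := le_trans h1 one_le_pi
  have hσ := dlt_le_sigma hs hm x ((i:ℝ)*π-δ) x ((i:ℝ)*π+δ)
  have e1 : S2 x ((i:ℝ)*π+δ) - S2 x ((i:ℝ)*π-δ) = 2 - 2*Real.cos δ := S2_cross i h0.le hδπ x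
  have hσ2 : dlt K U V x ((i:ℝ)*π-δ) x ((i:ℝ)*π+δ) ≤ (2 - 2*Real.cos δ) * (2*δ) := by
    have e2 : (S1 x ((i:ℝ)*π-δ) - S1 x ((i:ℝ)*π+δ))*(x-x)
        + (S2 x ((i:ℝ)*π-δ) - S2 x ((i:ℝ)*π+δ))*((((i:ℝ)*π-δ)) - ((i:ℝ)*π+δ))
          = (2 - 2*Real.cos δ) * (2*δ) := by
      have : S2 x ((i:ℝ)*π-δ) - S2 x ((i:ℝ)*π+δ) = -(2 - 2*Real.cos δ) := by linarith [e1]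
      rw [this]; ring
    linarith [hσ, e2.ge, e2.le]
  have hcc := cocoer hs hq x ((i:ℝ)*π-δ) x ((i:ℝ)*π+δ)
  have hcos : 2 - 2*Real.cos δ ≤ δ^2 := by
    have := Real.one_sub_sq_div_two_le_cos (x := δ)
    linarith
  apply abs_le_of_sq_le (by positivity)
  have hsq : (5*δ*Real.sqrt δ)^2 = 25*δ^2*δ := by
    have : (Real.sqrt δ)^2 = δ := Real.sq_sqrt h0.le
    nlinarith [this]
  rw [hsq]
  nlinarith [hcc, hσ2, hcos, sq_nonneg (V x ((i:ℝ)*π+δ) - V x ((i:ℝ)*π-δ))]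

/-! ### loop + limits -/

lemma div_step {a : ℝ} {δ : ℝ} (h0 : 0 < δ) (h1 : δ ≤ 1)
    (h : a * (2*δ) ≤ 24*δ^2 + π*(5*δ*Real.sqrt δ)) (ha : 0 ≤ a) : a ≤ 20*Real.sqrt δ := by
  have hδs : δ ≤ Real.sqrt δ := by
    have e : δ = Real.sqrt δ * Real.sqrt δ := (Real.mul_self_sqrt h0.le).symm
    have h2 : Real.sqrt δ ≤ 1 := Real.sqrt_le_one.mpr h1
    nlinarith [Real.sqrt_nonneg δ]
  have hπ : π < 3.15 := by linarith [Real.pi_lt_d2]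
  by_contra hc
  push_neg at hc
  have hs0 : 0 ≤ Real.sqrt δ := Real.sqrt_nonneg δ
  nlinarith [mul_lt_mul_of_pos_right hc (by linarith : (0:ℝ) < 2*δ), h, hδs, hs0, h0.le,
    mul_le_mul_of_nonneg_right hδs (by nlinarith : (0:ℝ) ≤ 24*δ)]

lemma loop_limit (hs : Hsub K U V) (hq : Hquad K U V) {xL xR : ℝ} (yb : ℝ) {δ : ℝ}
    (h0 : 0 < δ) (h1 : δ ≤ 1) (hxx : xR - xL = 2*δ)
    (hcross : ∀ y, yb ≤ y → y ≤ yb + π → |V xR y - V xL y| ≤ 5*δ*Real.sqrt δ) :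
    |U xL (yb+π) - U xR yb| ≤ 20*Real.sqrt δ := by
  have hκ : 0 ≤ 5*δ*Real.sqrt δ := by positivity
  have hloop := fun N hN => loop hs hq xL xR yb π _ Real.pi_pos hκ hcross N hN
  have hlim : |(U xL (yb+π) - U xR yb) * (xR - xL)| ≤ 6*(xR-xL)^2 + π*(5*δ*Real.sqrt δ) := by
    apply nat_limit (d := 12*π^2) (by positivity)
    intro N hN
    have := hloop N hN
    linarith [this]
  rw [hxx] at hlim
  rw [abs_mul, abs_of_pos (by linarith : (0:ℝ) < 2*δ)] at hlim
  apply div_step h0 h1 _ (abs_nonneg _)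
  nlinarith [hlim]

lemma loop2_limit (hs : Hsub K U V) (hq : Hquad K U V) {xL xR : ℝ} (yb : ℝ) {δ : ℝ}
    (h0 : 0 < δ) (h1 : δ ≤ 1) (hxx : xR - xL = 2*δ)
    (hcross : ∀ y, yb ≤ y → y ≤ yb + π → |V xR y - V xL y| ≤ 5*δ*Real.sqrt δ) :
    |U xR (yb+π) - U xL yb| ≤ 20*Real.sqrt δ := by
  have hκ : 0 ≤ 5*δ*Real.sqrt δ := by positivity
  have hloop := fun N hN => loop2 hs hq xL xR yb π _ Real.pi_pos hκ hcross N hN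
  have hlim : |(U xR (yb+π) - U xL yb) * (xR - xL)| ≤ 6*(xR-xL)^2 + π*(5*δ*Real.sqrt δ) := by
    apply nat_limit (d := 12*π^2) (by positivity)
    intro N hN
    have := hloop N hN
    linarith [this]
  rw [hxx] at hlim
  rw [abs_mul, abs_of_pos (by linarith : (0:ℝ) < 2*δ)] at hlim
  apply div_step h0 h1 _ (abs_nonneg _)
  nlinarith [hlim]

lemma loopV_limit (hs : Hsub K U V) (hq : Hquad K U V) {yL yR : ℝ} (xb : ℝ) {δ : ℝ}
    (h0 : 0 < δ) (h1 : δ ≤ 1) (hyy : yR - yL = 2*δ)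
    (hcross : ∀ x, xb ≤ x → x ≤ xb + π → |U x yR - U x yL| ≤ 5*δ*Real.sqrt δ) :
    |V (xb+π) yL - V xb yR| ≤ 20*Real.sqrt δ := by
  have hκ : 0 ≤ 5*δ*Real.sqrt δ := by positivity
  have hloop := fun N hN => loopV hs hq yL yR xb π _ Real.pi_pos hκ hcross N hN
  have hlim : |(V (xb+π) yL - V xb yR) * (yR - yL)| ≤ 6*(yR-yL)^2 + π*(5*δ*Real.sqrt δ) := by
    apply nat_limit (d := 12*π^2) (by positivity)
    intro N hN
    have := hloop N hN
    linarith [this]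
  rw [hyy] at hlim
  rw [abs_mul, abs_of_pos (by linarith : (0:ℝ) < 2*δ)] at hlim
  apply div_step h0 h1 _ (abs_nonneg _)
  nlinarith [hlim]

lemma loopV2_limit (hs : Hsub K U V) (hq : Hquad K U V) {yL yR : ℝ} (xb : ℝ) {δ : ℝ}
    (h0 : 0 < δ) (h1 : δ ≤ 1) (hyy : yR - yL = 2*δ)
    (hcross : ∀ x, xb ≤ x → x ≤ xb + π → |U x yR - U x yL| ≤ 5*δ*Real.sqrt δ) :
    |V (xb+π) yR - V xb yL| ≤ 20*Real.sqrt δ := by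
  have hκ : 0 ≤ 5*δ*Real.sqrt δ := by positivity
  have hloop := fun N hN => loopV2 hs hq yL yR xb π _ Real.pi_pos hκ hcross N hN
  have hlim : |(V (xb+π) yR - V xb yL) * (yR - yL)| ≤ 6*(yR-yL)^2 + π*(5*δ*Real.sqrt δ) := by
    apply nat_limit (d := 12*π^2) (by positivity)
    intro N hN
    have := hloop N hN
    linarith [this]
  rw [hyy] at hlim
  rw [abs_mul, abs_of_pos (by linarith : (0:ℝ) < 2*δ)] at hlim
  apply div_step h0 h1 _ (abs_nonneg _)
  nlinarith [hlim]

lemma eq_of_sqrt_bound {a b : ℝ} (h : ∀ δ:ℝ, 0 < δ → δ ≤ 1 → |a - b| ≤ 20*Real.sqrt δ) :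
    a = b := by
  have h1 : |a - b| ≤ 0 := sqrt_limit h
  have h2 := abs_nonneg (a - b)
  have : |a - b| = 0 := le_antisymm h1 h2
  rw [abs_eq_zero] at this
  linarith [this.ge, this.le]

end Concrete

/-! ### Equality of all segment constants -/

section Constants

variable {K U V : ℝ → ℝ → ℝ}

/-- representative value of `U` on the horizontal null segment `(j,n)`. -/
noncomputable def cH (U : ℝ → ℝ → ℝ) (j n : ℤ) : ℝ :=
  U (((j+2*n:ℤ):ℝ)*π + π/2) (π/2 + (j:ℝ)*π)

/-- representative value of `V` on the vertical null segment `(j,m)`. -/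
noncomputable def cV (V : ℝ → ℝ → ℝ) (j m : ℤ) : ℝ :=
  V (π/2 + (j:ℝ)*π) (((j+1+2*m:ℤ):ℝ)*π + π/2)

lemma relH1 (hs : Hsub K U V) (hm : Hmono U V) (j n : ℤ) :
    cH U (j+1) (n-1) = cH U j n := by
  apply eq_of_sqrt_bound
  intro δ h0 h1
  have hq := Hquad_of hs hm
  have hδπ : δ ≤ π := le_trans h1 one_le_pi
  have hπ2 : (0:ℝ) < π/2 := by linarith [Real.pi_pos]
  have hcross : ∀ y, (π/2 + (j:ℝ)*π) ≤ y → y ≤ (π/2 + (j:ℝ)*π) + π →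
      |V (((j+2*n:ℤ):ℝ)*π + δ) y - V (((j+2*n:ℤ):ℝ)*π - δ) y| ≤ 5*δ*Real.sqrt δ := by
    intro y _ _; exact crossH_bound hs hm (j+2*n) h0 h1 y
  have key := loop_limit hs hq (xL := ((j+2*n:ℤ):ℝ)*π - δ) (xR := ((j+2*n:ℤ):ℝ)*π + δ)
      (π/2 + (j:ℝ)*π) h0 h1 (by ring) hcross
  have eTop : U (((j+2*n:ℤ):ℝ)*π - δ) ((π/2 + (j:ℝ)*π) + π) = cH U (j+1) (n-1) := by
    have hb : (((j+1)+2*(n-1):ℤ):ℝ)*π = ((j+2*n:ℤ):ℝ)*π - π := by push_cast; ring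
    have h2 := (segH hs hm (j+1) (n-1)
      (x := ((j+2*n:ℤ):ℝ)*π - δ) (x' := (((j+1)+2*(n-1):ℤ):ℝ)*π + π/2)
      (by rw [hb]; linarith) (by rw [hb]; linarith)
      (by linarith) (by linarith)).1
    have ey : (π/2 + (j:ℝ)*π) + π = π/2 + (((j+1:ℤ)):ℝ)*π := by push_cast; ring
    rw [ey]
    rw [show ((j+1:ℤ):ℝ) = ((j:ℝ)+1) by push_cast; ring] at h2 ⊢
    unfold cH
    rw [h2]
    norm_cast
  have eBot : U (((j+2*n:ℤ):ℝ)*π + δ) (π/2 + (j:ℝ)*π) = cH U j n := by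
    have h2 := (segH hs hm j n
      (x := ((j+2*n:ℤ):ℝ)*π + δ) (x' := ((j+2*n:ℤ):ℝ)*π + π/2)
      (by linarith) (by linarith) (by linarith) (by linarith)).1
    unfold cH
    rw [h2]
  rw [eTop, eBot] at key
  exact key

lemma relH2 (hs : Hsub K U V) (hm : Hmono U V) (j n : ℤ) :
    cH U (j+1) n = cH U j n := by
  apply eq_of_sqrt_bound
  intro δ h0 h1
  have hq := Hquad_of hs hm
  have hδπ : δ ≤ π := le_trans h1 one_le_pi
  have hπ2 : (0:ℝ) < π/2 := by linarith [Real.pi_pos]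
  have hcross : ∀ y, (π/2 + (j:ℝ)*π) ≤ y → y ≤ (π/2 + (j:ℝ)*π) + π →
      |V (((j+2*n+1:ℤ):ℝ)*π + δ) y - V (((j+2*n+1:ℤ):ℝ)*π - δ) y| ≤ 5*δ*Real.sqrt δ := by
    intro y _ _; exact crossH_bound hs hm (j+2*n+1) h0 h1 y
  have key := loop2_limit hs hq (xL := ((j+2*n+1:ℤ):ℝ)*π - δ) (xR := ((j+2*n+1:ℤ):ℝ)*π + δ)
      (π/2 + (j:ℝ)*π) h0 h1 (by ring) hcross
  have eTop : U (((j+2*n+1:ℤ):ℝ)*π + δ) ((π/2 + (j:ℝ)*π) + π) = cH U (j+1) n := by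
    have hb : (((j+1)+2*n:ℤ):ℝ)*π = ((j+2*n+1:ℤ):ℝ)*π := by push_cast; ring
    have h2 := (segH hs hm (j+1) n
      (x := ((j+2*n+1:ℤ):ℝ)*π + δ) (x' := (((j+1)+2*n:ℤ):ℝ)*π + π/2)
      (by rw [hb]; linarith) (by rw [hb]; linarith)
      (by linarith) (by linarith)).1
    have ey : (π/2 + (j:ℝ)*π) + π = π/2 + (((j+1:ℤ)):ℝ)*π := by push_cast; ring
    rw [ey]
    rw [show ((j+1:ℤ):ℝ) = ((j:ℝ)+1) by push_cast; ring] at h2 ⊢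
    unfold cH
    rw [h2]
    norm_cast
  have eBot : U (((j+2*n+1:ℤ):ℝ)*π - δ) (π/2 + (j:ℝ)*π) = cH U j n := by
    have hb : ((j+2*n:ℤ):ℝ)*π = ((j+2*n+1:ℤ):ℝ)*π - π := by push_cast; ring
    have h2 := (segH hs hm j n
      (x := ((j+2*n+1:ℤ):ℝ)*π - δ) (x' := ((j+2*n:ℤ):ℝ)*π + π/2)
      (by rw [hb]; linarith) (by rw [hb]; linarith) (by linarith) (by linarith)).1
    unfold cH
    rw [h2]
  rw [eTop, eBot] at key
  exact key

lemma relV1 (hs : Hsub K U V) (hm : Hmono U V) (j m : ℤ) :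
    cV V (j+1) (m-1) = cV V j m := by
  apply eq_of_sqrt_bound
  intro δ h0 h1
  have hq := Hquad_of hs hm
  have hδπ : δ ≤ π := le_trans h1 one_le_pi
  have hπ2 : (0:ℝ) < π/2 := by linarith [Real.pi_pos]
  have hcross : ∀ x, (π/2 + (j:ℝ)*π) ≤ x → x ≤ (π/2 + (j:ℝ)*π) + π →
      |U x (((j+1+2*m:ℤ):ℝ)*π + δ) - U x (((j+1+2*m:ℤ):ℝ)*π - δ)| ≤ 5*δ*Real.sqrt δ := by
    intro x _ _; exact crossV_bound hs hm (j+1+2*m) h0 h1 x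
  have key := loopV_limit hs hq (yL := ((j+1+2*m:ℤ):ℝ)*π - δ) (yR := ((j+1+2*m:ℤ):ℝ)*π + δ)
      (π/2 + (j:ℝ)*π) h0 h1 (by ring) hcross
  have eTop : V ((π/2 + (j:ℝ)*π) + π) (((j+1+2*m:ℤ):ℝ)*π - δ) = cV V (j+1) (m-1) := by
    have hb : (((j+1)+1+2*(m-1):ℤ):ℝ)*π = ((j+1+2*m:ℤ):ℝ)*π - π := by push_cast; ring
    have h2 := (segV hs hm (j+1) (m-1)
      (y := ((j+1+2*m:ℤ):ℝ)*π - δ) (y' := (((j+1)+1+2*(m-1):ℤ):ℝ)*π + π/2)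
      (by rw [hb]; linarith) (by rw [hb]; linarith) (by linarith) (by linarith)).2
    have ex : (π/2 + (j:ℝ)*π) + π = π/2 + (((j+1:ℤ)):ℝ)*π := by push_cast; ring
    rw [ex]
    rw [show ((j+1:ℤ):ℝ) = ((j:ℝ)+1) by push_cast; ring] at h2 ⊢
    unfold cV
    rw [h2]
    norm_cast
  have eBot : V (π/2 + (j:ℝ)*π) (((j+1+2*m:ℤ):ℝ)*π + δ) = cV V j m := by
    have h2 := (segV hs hm j m
      (y := ((j+1+2*m:ℤ):ℝ)*π + δ) (y' := ((j+1+2*m:ℤ):ℝ)*π + π/2)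
      (by linarith) (by linarith) (by linarith) (by linarith)).2
    unfold cV
    rw [h2]
  rw [eTop, eBot] at key
  exact key

lemma relV2 (hs : Hsub K U V) (hm : Hmono U V) (j m : ℤ) :
    cV V (j+1) m = cV V j m := by
  apply eq_of_sqrt_bound
  intro δ h0 h1
  have hq := Hquad_of hs hm
  have hδπ : δ ≤ π := le_trans h1 one_le_pi
  have hπ2 : (0:ℝ) < π/2 := by linarith [Real.pi_pos]
  have hcross : ∀ x, (π/2 + (j:ℝ)*π) ≤ x → x ≤ (π/2 + (j:ℝ)*π) + π →
      |U x (((j+2+2*m:ℤ):ℝ)*π + δ) - U x (((j+2+2*m:ℤ):ℝ)*π - δ)| ≤ 5*δ*Real.sqrt δ := by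
    intro x _ _; exact crossV_bound hs hm (j+2+2*m) h0 h1 x
  have key := loopV2_limit hs hq (yL := ((j+2+2*m:ℤ):ℝ)*π - δ) (yR := ((j+2+2*m:ℤ):ℝ)*π + δ)
      (π/2 + (j:ℝ)*π) h0 h1 (by ring) hcross
  have eTop : V ((π/2 + (j:ℝ)*π) + π) (((j+2+2*m:ℤ):ℝ)*π + δ) = cV V (j+1) m := by
    have hb : (((j+1)+1+2*m:ℤ):ℝ)*π = ((j+2+2*m:ℤ):ℝ)*π := by push_cast; ring
    have h2 := (segV hs hm (j+1) m
      (y := ((j+2+2*m:ℤ):ℝ)*π + δ) (y' := (((j+1)+1+2*m:ℤ):ℝ)*π + π/2)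
      (by rw [hb]; linarith) (by rw [hb]; linarith) (by linarith) (by linarith)).2
    have ex : (π/2 + (j:ℝ)*π) + π = π/2 + (((j+1:ℤ)):ℝ)*π := by push_cast; ring
    rw [ex]
    rw [show ((j+1:ℤ):ℝ) = ((j:ℝ)+1) by push_cast; ring] at h2 ⊢
    unfold cV
    rw [h2]
    norm_cast
  have eBot : V (π/2 + (j:ℝ)*π) (((j+2+2*m:ℤ):ℝ)*π - δ) = cV V j m := by
    have hb : ((j+1+2*m:ℤ):ℝ)*π = ((j+2+2*m:ℤ):ℝ)*π - π := by push_cast; ring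
    have h2 := (segV hs hm j m
      (y := ((j+2+2*m:ℤ):ℝ)*π - δ) (y' := ((j+1+2*m:ℤ):ℝ)*π + π/2)
      (by rw [hb]; linarith) (by rw [hb]; linarith) (by linarith) (by linarith)).2
    unfold cV
    rw [h2]
  rw [eTop, eBot] at key
  exact key

lemma relH3 (hs : Hsub K U V) (hm : Hmono U V) (j n : ℤ) :
    cH U j (n+1) = cH U j n := by
  have h1 := relH1 hs hm j (n+1)
  have h2 := relH2 hs hm j n
  simp only [add_sub_cancel_right] at h1
  linarith [h1, h2]

lemma relV3 (hs : Hsub K U V) (hm : Hmono U V) (j m : ℤ) :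
    cV V j (m+1) = cV V j m := by
  have h1 := relV1 hs hm j (m+1)
  have h2 := relV2 hs hm j m
  simp only [add_sub_cancel_right] at h1
  linarith [h1, h2]

lemma cH_all (hs : Hsub K U V) (hm : Hmono U V) (j n : ℤ) : cH U j n = cH U 0 0 := by
  have stepj : ∀ j' n', cH U j' n' = cH U 0 n' := by
    intro j' n'
    induction j' using Int.induction_on with
    | zero => rfl
    | succ k ih => rw [relH2 hs hm k n']; exact ih
    | pred k ih =>
        have := relH2 hs hm (-(k:ℤ)-1) n'
        simp only [sub_add_cancel] at this
        rw [← this]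
        exact ih
  have stepn : ∀ n', cH U 0 n' = cH U 0 0 := by
    intro n'
    induction n' using Int.induction_on with
    | zero => rfl
    | succ k ih => rw [relH3 hs hm 0 k]; exact ih
    | pred k ih =>
        have := relH3 hs hm 0 (-(k:ℤ)-1)
        simp only [sub_add_cancel] at this
        rw [← this]
        exact ih
  rw [stepj j n, stepn n]

lemma cV_all (hs : Hsub K U V) (hm : Hmono U V) (j m : ℤ) : cV V j m = cV V 0 0 := by
  have stepj : ∀ j' m', cV V j' m' = cV V 0 m' := by
    intro j' m'
    induction j' using Int.induction_on with
    | zero => rfl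
    | succ k ih => rw [relV2 hs hm k m']; exact ih
    | pred k ih =>
        have := relV2 hs hm (-(k:ℤ)-1) m'
        simp only [sub_add_cancel] at this
        rw [← this]
        exact ih
  have stepm : ∀ m', cV V 0 m' = cV V 0 0 := by
    intro m'
    induction m' using Int.induction_on with
    | zero => rfl
    | succ k ih => rw [relV3 hs hm 0 k]; exact ih
    | pred k ih =>
        have := relV3 hs hm 0 (-(k:ℤ)-1)
        simp only [sub_add_cancel] at this
        rw [← this]
        exact ih
  rw [stepj j m, stepm m]

end Constants

/-! ### Filling in the gaps: `G` is globally constant -/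

section Filling

variable {K U V : ℝ → ℝ → ℝ}

lemma exists_int_le' (r : ℝ) : ∃ n : ℤ, (n:ℝ) ≤ r := ⟨⌊r⌋, Int.floor_le r⟩
lemma exists_int_ge' (r : ℝ) : ∃ n : ℤ, r ≤ (n:ℝ) := ⟨⌈r⌉, Int.le_ceil r⟩

lemma lineH (hs : Hsub K U V) (hm : Hmono U V) (j : ℤ) (x : ℝ) :
    U x (π/2 + (j:ℝ)*π) = cH U 0 0 := by
  have hπ := Real.pi_pos
  obtain ⟨n1, hn1⟩ := exists_int_le' (((x - π)/π - j)/2)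
  obtain ⟨n2, hn2⟩ := exists_int_ge' ((x/π - j)/2)
  have hx1 : ((j+2*n1:ℤ):ℝ)*π + π ≤ x := by
    have h1 : (j:ℝ) + 2*n1 ≤ (x - π)/π := by linarith [hn1]
    have h2 : ((j:ℝ) + 2*n1) * π ≤ x - π := (le_div_iff₀ hπ).mp h1
    push_cast
    linarith
  have hx2 : x ≤ ((j+2*n2:ℤ):ℝ)*π := by
    have h1 : x/π ≤ (j:ℝ) + 2*n2 := by linarith [hn2]
    have h2 : x ≤ ((j:ℝ) + 2*n2) * π := by
      rw [div_le_iff₀ hπ] at h1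
      linarith
    push_cast
    linarith
  have e1 : U (((j+2*n1:ℤ):ℝ)*π + π) (π/2 + (j:ℝ)*π) = cH U 0 0 := by
    have h2 := (segH hs hm j n1
      (x := ((j+2*n1:ℤ):ℝ)*π + π) (x' := ((j+2*n1:ℤ):ℝ)*π + π/2)
      (by linarith) (by linarith) (by linarith) (by linarith)).1
    rw [h2]
    exact cH_all hs hm j n1
  have e2 : U (((j+2*n2:ℤ):ℝ)*π) (π/2 + (j:ℝ)*π) = cH U 0 0 := by
    have h2 := (segH hs hm j n2
      (x := ((j+2*n2:ℤ):ℝ)*π) (x' := ((j+2*n2:ℤ):ℝ)*π + π/2)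
      (by linarith) (by linarith) (by linarith) (by linarith)).1
    rw [h2]
    exact cH_all hs hm j n2
  have m1 := mono_x hs (π/2 + (j:ℝ)*π) hx1
  have m2 := mono_x hs (π/2 + (j:ℝ)*π) hx2
  rw [e1] at m1
  rw [e2] at m2
  linarith

lemma lineV (hs : Hsub K U V) (hm : Hmono U V) (j : ℤ) (y : ℝ) :
    V (π/2 + (j:ℝ)*π) y = cV V 0 0 := by
  have hπ := Real.pi_pos
  obtain ⟨m1, hm1⟩ := exists_int_le' (((y - π)/π - j - 1)/2)
  obtain ⟨m2, hm2⟩ := exists_int_ge' ((y/π - j - 1)/2)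
  have hy1 : ((j+1+2*m1:ℤ):ℝ)*π + π ≤ y := by
    have h1 : (j:ℝ) + 1 + 2*m1 ≤ (y - π)/π := by linarith [hm1]
    have h2 : ((j:ℝ) + 1 + 2*m1) * π ≤ y - π := (le_div_iff₀ hπ).mp h1
    push_cast
    linarith
  have hy2 : y ≤ ((j+1+2*m2:ℤ):ℝ)*π := by
    have h1 : y/π ≤ (j:ℝ) + 1 + 2*m2 := by linarith [hm2]
    have h2 : y ≤ ((j:ℝ) + 1 + 2*m2) * π := by
      rw [div_le_iff₀ hπ] at h1
      linarith
    push_cast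
    linarith
  have e1 : V (π/2 + (j:ℝ)*π) (((j+1+2*m1:ℤ):ℝ)*π + π) = cV V 0 0 := by
    have h2 := (segV hs hm j m1
      (y := ((j+1+2*m1:ℤ):ℝ)*π + π) (y' := ((j+1+2*m1:ℤ):ℝ)*π + π/2)
      (by linarith) (by linarith) (by linarith) (by linarith)).2
    rw [h2]
    exact cV_all hs hm j m1
  have e2 : V (π/2 + (j:ℝ)*π) (((j+1+2*m2:ℤ):ℝ)*π) = cV V 0 0 := by
    have h2 := (segV hs hm j m2
      (y := ((j+1+2*m2:ℤ):ℝ)*π) (y' := ((j+1+2*m2:ℤ):ℝ)*π + π/2)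
      (by linarith) (by linarith) (by linarith) (by linarith)).2
    rw [h2]
    exact cV_all hs hm j m2
  have n1 := mono_y hs (π/2 + (j:ℝ)*π) hy1
  have n2 := mono_y hs (π/2 + (j:ℝ)*π) hy2
  rw [e1] at n1
  rw [e2] at n2
  linarith

lemma UonVseg (hs : Hsub K U V) (hm : Hmono U V) (j m : ℤ) {y : ℝ}
    (hy0 : ((j+1+2*m:ℤ):ℝ)*π ≤ y) (hy1 : y ≤ ((j+1+2*m:ℤ):ℝ)*π + π) :
    U (π/2 + (j:ℝ)*π) y = cH U 0 0 := by
  have hπ := Real.pi_pos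
  have h2 := (segV hs hm j m (y := y) (y' := π/2 + ((j+1+2*m:ℤ):ℝ)*π)
    hy0 hy1 (by linarith) (by linarith)).1
  rw [h2]
  exact lineH hs hm (j+1+2*m) (π/2 + (j:ℝ)*π)

lemma VonHseg (hs : Hsub K U V) (hm : Hmono U V) (j n : ℤ) {x : ℝ}
    (hx0 : ((j+2*n:ℤ):ℝ)*π ≤ x) (hx1 : x ≤ ((j+2*n:ℤ):ℝ)*π + π) :
    V x (π/2 + (j:ℝ)*π) = cV V 0 0 := by
  have hπ := Real.pi_pos
  have h2 := (segH hs hm j n (x := x) (x' := ((j+2*n:ℤ):ℝ)*π + π/2)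
    hx0 hx1 (by linarith) (by linarith)).2
  rw [h2]
  have ecomm : ((j+2*n:ℤ):ℝ)*π + π/2 = π/2 + ((j+2*n:ℤ):ℝ)*π := by ring
  rw [ecomm]
  exact lineV hs hm (j+2*n) (π/2 + (j:ℝ)*π)

lemma allU (hs : Hsub K U V) (hm : Hmono U V) (x y : ℝ) : U x y = cH U 0 0 := by
  have hπ := Real.pi_pos
  set i' : ℤ := ⌊y/π⌋ with hi'
  have hy0 : ((i':ℤ):ℝ)*π ≤ y := by
    have h1 : ((i':ℤ):ℝ) ≤ y/π := Int.floor_le _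
    calc ((i':ℤ):ℝ)*π ≤ (y/π)*π := by nlinarith
    _ = y := by field_simp
  have hy1 : y ≤ ((i':ℤ):ℝ)*π + π := by
    have h1 : y/π < ((i':ℤ):ℝ) + 1 := Int.lt_floor_add_one _
    have e : (y/π)*π = y := by field_simp
    nlinarith [h1]
  obtain ⟨m1, hm1⟩ := exists_int_ge' ((((i':ℝ) - 1)*π - (x - π/2))/(2*π))
  obtain ⟨m2, hm2⟩ := exists_int_le' ((((i':ℝ) - 1)*π - (x - π/2))/(2*π))
  set j1 : ℤ := i' - 1 - 2*m1 with hj1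
  set j2 : ℤ := i' - 1 - 2*m2 with hj2
  have hxl : π/2 + ((j1:ℤ):ℝ)*π ≤ x := by
    have h1 : (((i':ℝ) - 1)*π - (x - π/2)) ≤ 2*π*m1 := by
      rw [div_le_iff₀ (by linarith : (0:ℝ) < 2*π)] at hm1
      linarith [hm1]
    push_cast [hj1]
    nlinarith [h1]
  have hxr : x ≤ π/2 + ((j2:ℤ):ℝ)*π := by
    have h1 : 2*π*m2 ≤ (((i':ℝ) - 1)*π - (x - π/2)) := by
      rw [le_div_iff₀ (by linarith : (0:ℝ) < 2*π)] at hm2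
      linarith [hm2]
    push_cast [hj2]
    nlinarith [h1]
  have hyb1 : ((j1+1+2*m1:ℤ):ℝ)*π ≤ y := by
    have e : (j1+1+2*m1:ℤ) = i' := by omega
    rw [e]; exact hy0
  have hyb1' : y ≤ ((j1+1+2*m1:ℤ):ℝ)*π + π := by
    have e : (j1+1+2*m1:ℤ) = i' := by omega
    rw [e]; exact hy1
  have hyb2 : ((j2+1+2*m2:ℤ):ℝ)*π ≤ y := by
    have e : (j2+1+2*m2:ℤ) = i' := by omega
    rw [e]; exact hy0
  have hyb2' : y ≤ ((j2+1+2*m2:ℤ):ℝ)*π + π := by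
    have e : (j2+1+2*m2:ℤ) = i' := by omega
    rw [e]; exact hy1
  have u1 : U (π/2 + (j1:ℝ)*π) y = cH U 0 0 := UonVseg hs hm j1 m1 hyb1 hyb1'
  have u2 : U (π/2 + (j2:ℝ)*π) y = cH U 0 0 := UonVseg hs hm j2 m2 hyb2 hyb2'
  have mm1 := mono_x hs y hxl
  have mm2 := mono_x hs y hxr
  rw [u1] at mm1
  rw [u2] at mm2
  linarith

lemma allV (hs : Hsub K U V) (hm : Hmono U V) (x y : ℝ) : V x y = cV V 0 0 := by
  have hπ := Real.pi_pos
  set i : ℤ := ⌊x/π⌋ with hi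
  have hx0 : ((i:ℤ):ℝ)*π ≤ x := by
    have h1 : ((i:ℤ):ℝ) ≤ x/π := Int.floor_le _
    calc ((i:ℤ):ℝ)*π ≤ (x/π)*π := by nlinarith
    _ = x := by field_simp
  have hx1 : x ≤ ((i:ℤ):ℝ)*π + π := by
    have h1 : x/π < ((i:ℤ):ℝ) + 1 := Int.lt_floor_add_one _
    have e : (x/π)*π = x := by field_simp
    nlinarith [h1]
  obtain ⟨n1, hn1⟩ := exists_int_ge' (((i:ℝ)*π - (y - π/2))/(2*π))
  obtain ⟨n2, hn2⟩ := exists_int_le' (((i:ℝ)*π - (y - π/2))/(2*π))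
  set j1 : ℤ := i - 2*n1 with hj1
  set j2 : ℤ := i - 2*n2 with hj2
  have hyl : π/2 + ((j1:ℤ):ℝ)*π ≤ y := by
    have h1 : ((i:ℝ)*π - (y - π/2)) ≤ 2*π*n1 := by
      rw [div_le_iff₀ (by linarith : (0:ℝ) < 2*π)] at hn1
      linarith [hn1]
    push_cast [hj1]
    nlinarith [h1]
  have hyr : y ≤ π/2 + ((j2:ℤ):ℝ)*π := by
    have h1 : 2*π*n2 ≤ ((i:ℝ)*π - (y - π/2)) := by
      rw [le_div_iff₀ (by linarith : (0:ℝ) < 2*π)] at hn2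
      linarith [hn2]
    push_cast [hj2]
    nlinarith [h1]
  have hxb1 : ((j1+2*n1:ℤ):ℝ)*π ≤ x := by
    have e : (j1+2*n1:ℤ) = i := by omega
    rw [e]; exact hx0
  have hxb1' : x ≤ ((j1+2*n1:ℤ):ℝ)*π + π := by
    have e : (j1+2*n1:ℤ) = i := by omega
    rw [e]; exact hx1
  have hxb2 : ((j2+2*n2:ℤ):ℝ)*π ≤ x := by
    have e : (j2+2*n2:ℤ) = i := by omega
    rw [e]; exact hx0
  have hxb2' : x ≤ ((j2+2*n2:ℤ):ℝ)*π + π := by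
    have e : (j2+2*n2:ℤ) = i := by omega
    rw [e]; exact hx1
  have v1 : V x (π/2 + (j1:ℝ)*π) = cV V 0 0 := VonHseg hs hm j1 n1 hxb1 hxb1'
  have v2 : V x (π/2 + (j2:ℝ)*π) = cV V 0 0 := VonHseg hs hm j2 n2 hxb2 hxb2'
  have mm1 := mono_y hs x hyl
  have mm2 := mono_y hs x hyr
  rw [v1] at mm1
  rw [v2] at mm2
  linarith

/-- `U` and `V` are globally constant. -/
lemma G_const (hs : Hsub K U V) (hm : Hmono U V) (x y x' y' : ℝ) :
    U x y = U x' y' ∧ V x y = V x' y' := by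
  constructor
  · rw [allU hs hm x y, allU hs hm x' y']
  · rw [allV hs hm x y, allV hs hm x' y']

end Filling

end Aspl

/-! ### The main theorem -/

open scoped RealInnerProductSpace

namespace Aspl

noncomputable def ept (x y : ℝ) : EuclideanSpace ℝ (Fin 2) :=
  (WithLp.equiv 2 (Fin 2 → ℝ)).symm ![x, y]

@[simp] lemma ept_zero (x y : ℝ) : ept x y 0 = x := by simp [ept]
@[simp] lemma ept_one (x y : ℝ) : ept x y 1 = y := by simp [ept]

lemma ept_eta (z : EuclideanSpace ℝ (Fin 2)) : ept (z 0) (z 1) = z := by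
  ext i; fin_cases i <;> simp [ept]

lemma inner_expand (u v : EuclideanSpace ℝ (Fin 2)) : ⟪u, v⟫ = u 0 * v 0 + u 1 * v 1 := by
  simp [PiLp.inner_apply, Fin.sum_univ_two]; ring

lemma asplundS_zero (x y : ℝ) : asplundS (ept x y) 0 = S1 x y := by
  simp [asplundS, ept, S1, A]

lemma asplundS_one (x y : ℝ) : asplundS (ept x y) 1 = S2 x y := by
  simp [asplundS, ept, S2, A]

end Aspl

/-- acyclicity of `S`, key content of Theorem 2.4 / `thm:sincoupling`.
If `k : ℝ² → ℝ` is convex, `G` is a selection of subgradients of `k`, and `S − G` is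
monotone, then `k` is affine. -/
theorem asplundS_acyclic
    (k : EuclideanSpace ℝ (Fin 2) → ℝ)
    (hkconvex : ConvexOn ℝ Set.univ k)
    (G : EuclideanSpace ℝ (Fin 2) → EuclideanSpace ℝ (Fin 2))
    (hG : ∀ z w : EuclideanSpace ℝ (Fin 2), k w ≥ k z + ⟪G z, w - z⟫)
    (hmono : ∀ z z' : EuclideanSpace ℝ (Fin 2),
      ⟪(asplundS z - G z) - (asplundS z' - G z'), z - z'⟫ ≥ 0) :
    ∃ (a : EuclideanSpace ℝ (Fin 2)) (c : ℝ),
      ∀ z : EuclideanSpace ℝ (Fin 2), k z = ⟪a, z⟫ + c := by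
  classical
  set K : ℝ → ℝ → ℝ := fun x y => k (Aspl.ept x y) with hK
  set U : ℝ → ℝ → ℝ := fun x y => G (Aspl.ept x y) 0 with hU
  set V : ℝ → ℝ → ℝ := fun x y => G (Aspl.ept x y) 1 with hV
  have hs : Aspl.Hsub K U V := by
    intro x y x' y'
    have h := hG (Aspl.ept x y) (Aspl.ept x' y')
    rw [Aspl.inner_expand] at h
    simp only [PiLp.sub_apply, Aspl.ept_zero, Aspl.ept_one] at h
    unfold Aspl.dlt
    simp only [hK, hU, hV]
    linarith [h]
  have hm : Aspl.Hmono U V := by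
    intro x y x' y'
    have h := hmono (Aspl.ept x y) (Aspl.ept x' y')
    rw [Aspl.inner_expand] at h
    simp only [PiLp.sub_apply, Aspl.ept_zero, Aspl.ept_one,
      Aspl.asplundS_zero, Aspl.asplundS_one] at h
    simp only [hU, hV]
    nlinarith [h]
  obtain z0eq : ∀ x y : ℝ, U x y = U 0 0 ∧ V x y = V 0 0 :=
    fun x y => Aspl.G_const hs hm x y 0 0
  refine ⟨G (Aspl.ept 0 0), k (Aspl.ept 0 0), ?_⟩
  intro z
  have hGz : ∀ i : Fin 2, G z i = G (Aspl.ept 0 0) i := by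
    intro i
    have hz : G z = G (Aspl.ept (z 0) (z 1)) := by rw [Aspl.ept_eta]
    fin_cases i
    · rw [hz]
      exact (z0eq (z 0) (z 1)).1
    · rw [hz]
      exact (z0eq (z 0) (z 1)).2
  have h1 := hG (Aspl.ept 0 0) z
  have h2 := hG z (Aspl.ept 0 0)
  rw [Aspl.inner_expand] at h1 h2
  simp only [PiLp.sub_apply, Aspl.ept_zero, Aspl.ept_one] at h1 h2
  rw [hGz 0, hGz 1] at h2
  rw [Aspl.inner_expand]
  linarith [h1, h2]
end

section
/- The operator S : ℝ² → ℝ² defined by S(x, y) = (cos x · sin y + ∫₀ˣ |sin t| dt, − sin x · cos y + ∫₀ʸ |sin t| dt) is monotone: for all z, z' ∈ ℝ², ⟨S(z) − S(z'), z − z'⟩ ≥ 0. -/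
open scoped RealInnerProductSpace

noncomputable def asplundF : ℝ → ℝ := fun x => ∫ t in (0:ℝ)..x, |Real.sin t|

lemma asplundF_hasDerivAt (x : ℝ) : HasDerivAt asplundF |Real.sin x| x := by
  have hc : Continuous fun t => |Real.sin t| := Real.continuous_sin.abs
  exact intervalIntegral.integral_hasDerivAt_right (hc.intervalIntegrable _ _)
    hc.stronglyMeasurable.stronglyMeasurableAtFilter hc.continuousAt

/-- the operator `S` is monotone. -/
theorem asplundS_monotone :
    ∀ z z' : EuclideanSpace ℝ (Fin 2), ⟪asplundS z - asplundS z', z - z'⟫ ≥ 0 := by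
  intro z z'
  set x0 : ℝ := z' 0 with hx0
  set y0 : ℝ := z' 1 with hy0
  set dx : ℝ := z 0 - z' 0 with hdx
  set dy : ℝ := z 1 - z' 1 with hdy
  set φ : ℝ → ℝ := fun t =>
    (Real.cos (x0 + t * dx) * Real.sin (y0 + t * dy) + asplundF (x0 + t * dx)) * dx
    + (-(Real.sin (x0 + t * dx)) * Real.cos (y0 + t * dy) + asplundF (y0 + t * dy)) * dy
    with hφ
  have hX : ∀ t : ℝ, HasDerivAt (fun t : ℝ => x0 + t * dx) dx t := fun t =>
    (hasDerivAt_mul_const dx).const_add x0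
  have hY : ∀ t : ℝ, HasDerivAt (fun t : ℝ => y0 + t * dy) dy t := fun t =>
    (hasDerivAt_mul_const dy).const_add y0
  have hD : ∀ t : ℝ, HasDerivAt φ
      (((-Real.sin (x0 + t * dx) * dx) * Real.sin (y0 + t * dy)
        + Real.cos (x0 + t * dx) * (Real.cos (y0 + t * dy) * dy)
        + |Real.sin (x0 + t * dx)| * dx) * dx
      + ((-(Real.cos (x0 + t * dx) * dx)) * Real.cos (y0 + t * dy)
        + -(Real.sin (x0 + t * dx)) * (-Real.sin (y0 + t * dy) * dy)
        + |Real.sin (y0 + t * dy)| * dy) * dy) t := by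
    intro t
    have hcos : HasDerivAt (fun t : ℝ => Real.cos (x0 + t * dx))
        (-Real.sin (x0 + t * dx) * dx) t :=
      by have := (Real.hasDerivAt_cos (x0 + t * dx)).comp t (hX t); exact this
    have hsin : HasDerivAt (fun t : ℝ => Real.sin (x0 + t * dx))
        (Real.cos (x0 + t * dx) * dx) t :=
      by have := (Real.hasDerivAt_sin (x0 + t * dx)).comp t (hX t); exact this
    have hsinY : HasDerivAt (fun t : ℝ => Real.sin (y0 + t * dy))
        (Real.cos (y0 + t * dy) * dy) t :=
      by have := (Real.hasDerivAt_sin (y0 + t * dy)).comp t (hY t); exact this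
    have hcosY : HasDerivAt (fun t : ℝ => Real.cos (y0 + t * dy))
        (-Real.sin (y0 + t * dy) * dy) t :=
      by have := (Real.hasDerivAt_cos (y0 + t * dy)).comp t (hY t); exact this
    have hFX : HasDerivAt (fun t : ℝ => asplundF (x0 + t * dx))
        (|Real.sin (x0 + t * dx)| * dx) t :=
      by have := (asplundF_hasDerivAt (x0 + t * dx)).comp t (hX t); exact this
    have hFY : HasDerivAt (fun t : ℝ => asplundF (y0 + t * dy))
        (|Real.sin (y0 + t * dy)| * dy) t :=
      by have := (asplundF_hasDerivAt (y0 + t * dy)).comp t (hY t); exact this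
    exact ((((hcos.mul hsinY).add hFX).mul_const dx).add
      ((((hsin.neg.mul hcosY)).add hFY).mul_const dy))
  have hmono : Monotone φ := by
    apply monotone_of_deriv_nonneg (fun t => (hD t).differentiableAt)
    intro t
    rw [(hD t).deriv]
    set a := Real.sin (x0 + t * dx) with ha
    set b := Real.sin (y0 + t * dy) with hb
    have h1 : a * b ≤ |a| := by
      calc a * b ≤ |a * b| := le_abs_self _
        _ = |a| * |b| := abs_mul _ _
        _ ≤ |a| * 1 := by
            exact mul_le_mul_of_nonneg_left (abs_le.2 ⟨Real.neg_one_le_sin _, Real.sin_le_one _⟩)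
              (abs_nonneg _)
        _ = |a| := mul_one _
    have h2 : -(a * b) ≤ |b| := by
      calc -(a * b) ≤ |a * b| := neg_le_abs _
        _ = |a| * |b| := abs_mul _ _
        _ ≤ 1 * |b| := by
            exact mul_le_mul_of_nonneg_right (abs_le.2 ⟨Real.neg_one_le_sin _, Real.sin_le_one _⟩)
              (abs_nonneg _)
        _ = |b| := one_mul _
    nlinarith [mul_nonneg (sub_nonneg.2 h1) (sq_nonneg dx),
      mul_nonneg (by linarith : (0:ℝ) ≤ |b| + a*b) (sq_nonneg dy),
      sq_nonneg dx, sq_nonneg dy]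
  have key : φ 0 ≤ φ 1 := hmono zero_le_one
  have e1 : x0 + (1:ℝ) * dx = z 0 := by rw [hdx]; ring
  have e2 : y0 + (1:ℝ) * dy = z 1 := by rw [hdy]; ring
  have e3 : x0 + (0:ℝ) * dx = z' 0 := by rw [hx0]; ring
  have e4 : y0 + (0:ℝ) * dy = z' 1 := by rw [hy0]; ring
  rw [hφ] at key
  simp only [e1, e2, e3, e4] at key
  simp only [asplundS, ge_iff_le, PiLp.inner_apply, RCLike.inner_apply, conj_trivial,
    Fin.sum_univ_two, PiLp.sub_apply, WithLp.equiv_symm_apply, PiLp.toLp_apply, Matrix.cons_val_zero,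
    Matrix.cons_val_one, Matrix.head_cons]
  rw [hdx, hdy] at key
  simp only [asplundF] at key
  nlinarith [key]
end
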